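/- arXiv:2407.03088 — 5 statements merged into one kernel-verified Lean document; each statement's English description precedes it below -/
import Mathlib

section
/- Let P be an n×n correlation with strictly positive entries and let 0 ≤ λ < 1. Then there exist a dimension d and a state σ generating P with local dimension d under depolarizing noise of strength λ if and only if there exist vectors s, t ∈ ℝ_{>0}^n with ‖s‖₁ = ‖t‖₁ = 1 such that P̂_λ^{s,t}(x,y) ≥ 0 for all x, y ∈ {1,…,n}. -/
open Matrix BigOperators Finset
open scoped Kronecker ComplexOrder

noncomputable section

/-- The effect of the depolarizing channel on a measurement effect (Heisenberg picture). -/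
def noisyEffect {d : ℕ} (lam : ℝ) (E : Matrix (Fin d) (Fin d) ℂ) : Matrix (Fin d) (Fin d) ℂ :=
  ((1 - lam : ℝ) : ℂ) • E + ((lam : ℂ) * E.trace / (d : ℂ)) • (1 : Matrix (Fin d) (Fin d) ℂ)

/-- A POVM on ℂ^d with n outcomes. -/
def IsPOVM {d n : ℕ} (E : Fin n → Matrix (Fin d) (Fin d) ℂ) : Prop :=
  (∀ x, (E x).PosSemidef) ∧ ∑ x, E x = 1

/-- P is generated with local dimension d under depolarizing noise of strength lam. -/
def GeneratesWithNoise {n : ℕ} (P : Matrix (Fin n) (Fin n) ℝ) (lam : ℝ) (d : ℕ) : Prop :=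
  ∃ (σ : Matrix (Fin d × Fin d) (Fin d × Fin d) ℂ)
    (E F : Fin n → Matrix (Fin d) (Fin d) ℂ),
    σ.PosSemidef ∧ σ.trace = 1 ∧ IsPOVM E ∧ IsPOVM F ∧
    ∀ x y, (P x y : ℂ) =
      ((noisyEffect lam (E x) ⊗ₖ noisyEffect lam (F y)) * σ).trace

/-- The matrix P̂_λ^{s,t}. -/
def Phat {n : ℕ} (P : Matrix (Fin n) (Fin n) ℝ) (lam : ℝ) (s t : Fin n → ℝ)
    (x y : Fin n) : ℝ :=
  P x y - lam * s x * (∑ a, P a y) - lam * t y * (∑ b, P x b) + lam ^ 2 * s x * t y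

/-- Nonnegative rank. -/
def NonnegRank {m n : ℕ} (P : Matrix (Fin m) (Fin n) ℝ) : ℕ :=
  sInf {r : ℕ | ∃ (u : Fin r → Fin m → ℝ) (v : Fin r → Fin n → ℝ),
    (∀ i x, 0 ≤ u i x) ∧ (∀ i y, 0 ≤ v i y) ∧ ∀ x y, P x y = ∑ i, u i x * v i y}

/-- PSD rank. -/
def PsdRank {m n : ℕ} (M : Matrix (Fin m) (Fin n) ℝ) : ℕ :=
  sInf {r : ℕ | ∃ (C : Fin m → Matrix (Fin r) (Fin r) ℂ)
    (D : Fin n → Matrix (Fin r) (Fin r) ℂ),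
    (∀ x, (C x).PosSemidef) ∧ (∀ y, (D y).PosSemidef) ∧
    ∀ x y, (M x y : ℂ) = (C x * D y).trace}

def outerProj {α : Type*} [Fintype α] (ψ : α → ℂ) : Matrix α α ℂ :=
  Matrix.of fun i j => ψ i * (starRingEnd ℂ) (ψ j)

def qval (k : ℝ) : ℝ := 1 / (1 - k) - Real.sqrt (1 / (1 - k) ^ 2 - 1)

def Bmat (m : ℕ) (k : ℝ) : Matrix (Fin m) (Fin m) ℝ :=
  Matrix.of fun x y =>
    (1 / (m : ℝ) ^ 2) * (1 - k * Real.cos (2 * Real.pi * ((x.val : ℝ) + (y.val : ℝ)) / m))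

def Amat (m : ℕ) (k : ℝ) : Matrix (Fin (m + 1)) (Fin (m + 1)) ℝ :=
  Matrix.of fun x y =>
    if x.val = 0 then
      (if y.val = 0 then (1 - qval k) ^ 2 / 2 else qval k * (1 - qval k) / (2 * m))
    else if y.val = 0 then qval k * (1 - qval k) / (2 * m)
    else ((1 + (qval k) ^ 2) / 2) *
      ((1 / (m : ℝ) ^ 2) *
        (1 - k * Real.cos (2 * Real.pi * (((x.val : ℝ) - 1) + ((y.val : ℝ) - 1)) / m)))

def IsElPsdFactorization {n : ℕ} (P : Matrix (Fin n) (Fin n) ℝ) (lam : ℝ) (r : ℕ)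
    (C D : Fin n → Matrix (Fin r) (Fin r) ℂ) : Prop :=
  (∀ x, (C x).PosSemidef) ∧ (∀ y, (D y).PosSemidef) ∧
  (∀ x y, (P x y : ℂ) = (C x * D y).trace) ∧
  IsUnit (∑ k, C k) ∧ IsUnit (∑ k, D k) ∧
  (∀ x, (C x - (((lam : ℂ) / r) * (C x * (∑ k, C k)⁻¹).trace) • (∑ k, C k)).PosSemidef) ∧
  (∀ y, (D y - (((lam : ℂ) / r) * (D y * (∑ k, D k)⁻¹).trace) • (∑ k, D k)).PosSemidef)


lemma diag_nonneg_of_psd {m : Type*} [Fintype m] [DecidableEq m] {A : Matrix m m ℂ}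
    (hA : A.PosSemidef) (i : m) : 0 ≤ A i i := by
  exact hA.diag_nonneg

lemma trace_nonneg_of_psd {m : Type*} [Fintype m] [DecidableEq m] {A : Matrix m m ℂ}
    (hA : A.PosSemidef) : 0 ≤ A.trace :=
  Finset.sum_nonneg fun i _ => diag_nonneg_of_psd hA i

lemma psd_kron {d : ℕ} {A B : Matrix (Fin d) (Fin d) ℂ}
    (hA : A.PosSemidef) (hB : B.PosSemidef) : (A ⊗ₖ B).PosSemidef := by
  exact Matrix.PosSemidef.kronecker hA hB

lemma trace_mul_nonneg_of_psd {m : Type*} [Fintype m] [DecidableEq m] {A B : Matrix m m ℂ}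
    (hA : A.PosSemidef) (hB : B.PosSemidef) : 0 ≤ (A * B).trace := by
  open scoped MatrixOrder in
  obtain ⟨b, rfl⟩ := CStarAlgebra.nonneg_iff_eq_star_mul_self.mp hB.nonneg
  rw [star_eq_conjTranspose, ← Matrix.mul_assoc, Matrix.trace_mul_cycle]
  exact (hA.mul_mul_conjTranspose_same b).trace_nonneg

lemma psd_eq_zero_of_trace_eq_zero {m : Type*} [Fintype m] [DecidableEq m] {A : Matrix m m ℂ}
    (hA : A.PosSemidef) (h : A.trace = 0) : A = 0 := by
  exact hA.trace_eq_zero_iff.mp h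

def bDiag (n m : ℕ) (u : Fin n → ℝ) (x : Fin n) (i : Fin (n + m)) : ℝ :=
  if (i : ℕ) < n then (if (i : ℕ) = (x : ℕ) then 1 else 0)
  else (((n : ℝ) + m) * u x - 1) / m

lemma bDiag_castAdd (n m : ℕ) (u : Fin n → ℝ) (x x' : Fin n) :
    bDiag n m u x (Fin.castAdd m x') = if x' = x then 1 else 0 := by
  simp [bDiag, x'.isLt, Fin.val_eq_val]

lemma bDiag_natAdd (n m : ℕ) (u : Fin n → ℝ) (x : Fin n) (i : Fin m) :
    bDiag n m u x (Fin.natAdd n i) = (((n : ℝ) + m) * u x - 1) / m := by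
  simp [bDiag]

lemma bDiag_nonneg (n m : ℕ) (u : Fin n → ℝ) (x : Fin n)
    (h : 1 ≤ ((n : ℝ) + m) * u x) (i : Fin (n + m)) : 0 ≤ bDiag n m u x i := by
  rw [bDiag]
  split_ifs
  · norm_num
  · norm_num
  · apply div_nonneg (by linarith) (Nat.cast_nonneg m)

lemma bDiag_trace (n m : ℕ) (hm : m ≠ 0) (u : Fin n → ℝ) (x : Fin n) :
    ∑ i, bDiag n m u x i = ((n : ℝ) + m) * u x := by
  rw [Fin.sum_univ_add]
  have h1 : ∑ i : Fin n, bDiag n m u x (Fin.castAdd m i) = 1 := by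
    simp only [bDiag_castAdd]
    rw [Finset.sum_ite_eq' Finset.univ x (fun _ => (1:ℝ))]
    simp
  have h2 : ∑ i : Fin m, bDiag n m u x (Fin.natAdd n i) = ((n : ℝ) + m) * u x - 1 := by
    simp only [bDiag_natAdd]
    rw [Finset.sum_const, Finset.card_univ, Fintype.card_fin, nsmul_eq_mul]
    have hm' : (m : ℝ) ≠ 0 := Nat.cast_ne_zero.mpr hm
    field_simp
  rw [h1, h2]; ring

lemma bDiag_sum (n m : ℕ) (hm : m ≠ 0) (u : Fin n → ℝ) (hu : ∑ x, u x = 1)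
    (i : Fin (n + m)) : ∑ x, bDiag n m u x i = 1 := by
  unfold bDiag
  by_cases hi : (i : ℕ) < n
  · simp only [if_pos hi]
    have hc : ∀ x : Fin n, ((i : ℕ) = (x : ℕ)) = (x = ⟨(i : ℕ), hi⟩) := by
      intro x
      apply propext
      constructor
      · intro h; exact Fin.ext h.symm
      · intro h; subst h; rfl
    simp only [hc]
    rw [Finset.sum_ite_eq' Finset.univ _ (fun _ => (1:ℝ))]
    simp
  · simp only [if_neg hi]
    rw [← Finset.sum_div, Finset.sum_sub_distrib, ← Finset.mul_sum, hu, mul_one,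
      Finset.sum_const, Finset.card_univ, Fintype.card_fin, nsmul_eq_mul, mul_one]
    have hm' : (m : ℝ) ≠ 0 := Nat.cast_ne_zero.mpr hm
    field_simp
    ring

lemma bDiag_povm (n m : ℕ) (hm : m ≠ 0) (u : Fin n → ℝ) (hu : ∑ x, u x = 1)
    (hu1 : ∀ x, 1 ≤ ((n : ℝ) + m) * u x) :
    (∀ x, (Matrix.diagonal fun i => ((bDiag n m u x i : ℝ) : ℂ)).PosSemidef) ∧
      ∑ x, Matrix.diagonal (fun i => ((bDiag n m u x i : ℝ) : ℂ)) = 1 := by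
  constructor
  · intro x
    rw [Matrix.posSemidef_diagonal_iff]
    intro i
    exact_mod_cast Complex.zero_le_real.mpr (bDiag_nonneg n m u x (hu1 x) i)
  · ext i j
    rw [Matrix.sum_apply]
    by_cases hij : i = j
    · subst hij
      simp only [Matrix.diagonal_apply_eq, Matrix.one_apply_eq]
      exact_mod_cast bDiag_sum n m hm u hu i
    · simp [Matrix.diagonal_apply_ne _ hij, Matrix.one_apply_ne hij]

lemma bDiag_diag_trace (n m : ℕ) (hm : m ≠ 0) (u : Fin n → ℝ) (x : Fin n) :
    (Matrix.diagonal fun i => ((bDiag n m u x i : ℝ) : ℂ)).trace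
      = ((((n : ℝ) + m) * u x : ℝ) : ℂ) := by
  rw [Matrix.trace_diagonal]
  rw [← bDiag_trace n m hm u x]
  push_cast
  ring

lemma noisy_bDiag (lam : ℝ) (n m : ℕ) (hm : m ≠ 0) (u : Fin n → ℝ) (x : Fin n) :
    noisyEffect lam (Matrix.diagonal fun i => ((bDiag n m u x i : ℝ) : ℂ)) =
      Matrix.diagonal fun i =>
        (((1 - lam) * bDiag n m u x i + lam * u x : ℝ) : ℂ) := by
  rw [noisyEffect, bDiag_diag_trace n m hm u x]
  have hd : ((n + m : ℕ) : ℂ) ≠ 0 :=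
    Nat.cast_ne_zero.mpr (by omega)
  have hcoef : (lam : ℂ) * ((((n : ℝ) + m) * u x : ℝ) : ℂ) / ((n + m : ℕ) : ℂ)
      = ((lam * u x : ℝ) : ℂ) := by
    push_cast
    field_simp
  rw [hcoef]
  ext i j
  by_cases hij : i = j
  · subst hij
    simp only [Matrix.add_apply, Matrix.smul_apply, Matrix.diagonal_apply_eq,
      Matrix.one_apply_eq, smul_eq_mul]
    push_cast
    ring
  · simp [Matrix.diagonal_apply_ne _ hij, Matrix.one_apply_ne hij]

lemma trace_diag_kron_mul {d : ℕ} (a b : Fin d → ℂ) (c : Fin d × Fin d → ℂ) :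
    ((Matrix.diagonal a ⊗ₖ Matrix.diagonal b) * Matrix.diagonal c).trace
      = ∑ p : Fin d × Fin d, a p.1 * b p.2 * c p := by
  rw [Matrix.diagonal_kronecker_diagonal, Matrix.diagonal_mul_diagonal, Matrix.trace_diagonal]

/-- reachability under depolarizing noise is equivalent to the existence of
positive weight vectors s, t with ‖s‖₁ = ‖t‖₁ = 1 making P̂_λ^{s,t} entrywise nonnegative. -/
theorem reachability_iff_Phat_nonneg
    {n : ℕ} (P : Matrix (Fin n) (Fin n) ℝ)
    (hpos : ∀ x y, 0 < P x y) (hsum : ∑ x, ∑ y, P x y = 1)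
    (lam : ℝ) (hlam0 : 0 ≤ lam) (hlam1 : lam < 1) :
    (∃ d : ℕ, GeneratesWithNoise P lam d) ↔
    (∃ s t : Fin n → ℝ, (∀ x, 0 < s x) ∧ (∀ y, 0 < t y) ∧
      (∑ x, s x) = 1 ∧ (∑ y, t y) = 1 ∧
      ∀ x y, 0 ≤ Phat P lam s t x y) := by
  have hn : 0 < n := by
    rcases Nat.eq_zero_or_pos n with h | h
    · exfalso; subst h; simp at hsum
    · exact h
  constructor
  · rintro ⟨d, σ, Em, Fm, hσpsd, hσtr, ⟨hEpsd, hEsum⟩, ⟨hFpsd, hFsum⟩, hgen⟩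
    have hd : 0 < d := by
      rcases Nat.eq_zero_or_pos d with h | h
      · exfalso; subst h
        rw [Matrix.trace_eq_zero_of_isEmpty] at hσtr
        exact absurd hσtr (by norm_num)
      · exact h
    by_cases hlz : lam = 0
    · subst hlz
      have hn' : (0:ℝ) < n := Nat.cast_pos.mpr hn
      refine ⟨fun _ => 1 / n, fun _ => 1 / n, fun _ => by positivity, fun _ => by positivity,
        ?_, ?_, ?_⟩
      · rw [Finset.sum_const, Finset.card_univ, Fintype.card_fin, nsmul_eq_mul]
        field_simp
      · rw [Finset.sum_const, Finset.card_univ, Fintype.card_fin, nsmul_eq_mul]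
        field_simp
      · intro x y
        have h := (hpos x y).le
        simp only [Phat, zero_mul, mul_zero, sub_zero, add_zero, zero_pow, ne_eq,
          OfNat.ofNat_ne_zero, not_false_eq_true]
        linarith
    · have hdC : (d : ℂ) ≠ 0 := Nat.cast_ne_zero.mpr hd.ne'
      have hdR : (0:ℝ) < d := Nat.cast_pos.mpr hd
      have hdR' : (d:ℝ) ≠ 0 := hdR.ne'
      have htr_real : ∀ (G : Matrix (Fin d) (Fin d) ℂ), G.PosSemidef →
          G.trace = ((G.trace.re : ℝ) : ℂ) := by
        intro G hG
        have h0 := trace_nonneg_of_psd hG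
        rw [Complex.nonneg_iff] at h0
        exact Complex.ext rfl (by simpa using h0.2.symm)
      set s : Fin n → ℝ := fun x => (Em x).trace.re / d with hs
      set t : Fin n → ℝ := fun y => (Fm y).trace.re / d with ht
      have htE : ∀ x, (Em x).trace = ((d * s x : ℝ) : ℂ) := by
        intro x
        rw [htr_real _ (hEpsd x)]
        congr 1
        rw [hs]
        field_simp
      have htF : ∀ y, (Fm y).trace = ((d * t y : ℝ) : ℂ) := by
        intro y
        rw [htr_real _ (hFpsd y)]
        congr 1
        rw [ht]
        field_simp
      have noisyE : ∀ (G : Matrix (Fin d) (Fin d) ℂ) (r : ℝ), G.trace = ((d * r : ℝ) : ℂ) →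
          noisyEffect lam G = ((1 - lam : ℝ) : ℂ) • G + ((lam * r : ℝ) : ℂ) • 1 := by
        intro G r hG
        rw [noisyEffect, hG]
        congr 2
        push_cast
        field_simp
      have hT11 : (((1 : Matrix (Fin d) (Fin d) ℂ) ⊗ₖ 1) * σ).trace = 1 := by
        rw [Matrix.one_kronecker_one, one_mul, hσtr]
      have hkron_sum_r : ∀ (A : Matrix (Fin d) (Fin d) ℂ)
          (G : Fin n → Matrix (Fin d) (Fin d) ℂ),
          (A ⊗ₖ ∑ y, G y) = ∑ y, A ⊗ₖ G y := by
        intro A G; ext i j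
        simp [Matrix.kroneckerMap_apply, Matrix.sum_apply, Finset.mul_sum]
      have hkron_sum_l : ∀ (B : Matrix (Fin d) (Fin d) ℂ)
          (G : Fin n → Matrix (Fin d) (Fin d) ℂ),
          ((∑ x, G x) ⊗ₖ B) = ∑ x, G x ⊗ₖ B := by
        intro B G; ext i j
        simp [Matrix.kroneckerMap_apply, Matrix.sum_apply, Finset.sum_mul]
      have hexp : ∀ (A B : Matrix (Fin d) (Fin d) ℂ) (a b c e : ℝ),
          (((((a : ℝ) : ℂ) • A + ((b : ℝ) : ℂ) • 1) ⊗ₖ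
            (((c : ℝ) : ℂ) • B + ((e : ℝ) : ℂ) • 1)) * σ).trace
            = ((a : ℝ) : ℂ) * ((c : ℝ) : ℂ) * ((A ⊗ₖ B) * σ).trace
              + ((a : ℝ) : ℂ) * ((e : ℝ) : ℂ) * ((A ⊗ₖ 1) * σ).trace
              + ((b : ℝ) : ℂ) * ((c : ℝ) : ℂ)
                * (((1 : Matrix (Fin d) (Fin d) ℂ) ⊗ₖ B) * σ).trace
              + ((b : ℝ) : ℂ) * ((e : ℝ) : ℂ) := by
        intro A B a b c e
        rw [Matrix.add_kronecker]
        simp only [Matrix.kronecker_add, Matrix.smul_kronecker, Matrix.kronecker_smul,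
          smul_smul, Matrix.add_mul, Matrix.smul_mul, Matrix.trace_add, Matrix.trace_smul,
          smul_eq_mul]
        rw [hT11]
        ring
      have hNiE : ∀ x, noisyEffect lam (Em x)
          = ((1 - lam : ℝ) : ℂ) • Em x + ((lam * s x : ℝ) : ℂ) • 1 :=
        fun x => noisyE _ _ (htE x)
      have hNiF : ∀ y, noisyEffect lam (Fm y)
          = ((1 - lam : ℝ) : ℂ) • Fm y + ((lam * t y : ℝ) : ℂ) • 1 :=
        fun y => noisyE _ _ (htF y)
      have hgen' : ∀ x y, (P x y : ℂ)
          = (1 - (lam : ℂ)) * (1 - (lam : ℂ)) * ((Em x ⊗ₖ Fm y) * σ).trace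
            + (1 - (lam : ℂ)) * ((lam : ℂ) * (t y : ℂ)) * ((Em x ⊗ₖ 1) * σ).trace
            + ((lam : ℂ) * (s x : ℂ)) * (1 - (lam : ℂ))
              * (((1 : Matrix (Fin d) (Fin d) ℂ) ⊗ₖ Fm y) * σ).trace
            + ((lam : ℂ) * (s x : ℂ)) * ((lam : ℂ) * (t y : ℂ)) := by
        intro x y
        rw [hgen x y, hNiE x, hNiF y, hexp]
        push_cast
        ring
      have hNsum : ∀ (G : Fin n → Matrix (Fin d) (Fin d) ℂ), (∑ y, G y) = 1 →
          ∑ y, noisyEffect lam (G y) = 1 := by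
        intro G hG
        simp only [noisyEffect]
        rw [Finset.sum_add_distrib, ← Finset.smul_sum, hG, ← Finset.sum_smul]
        have he : ∑ y, (lam : ℂ) * (G y).trace / d = (lam : ℂ) := by
          rw [← Finset.sum_div, ← Finset.mul_sum, ← Matrix.trace_sum, hG, Matrix.trace_one]
          simp only [Fintype.card_fin]
          field_simp
        rw [he, ← add_smul,
          show ((1 - lam : ℝ) : ℂ) + (lam : ℂ) = 1 by push_cast; ring, one_smul]
      have hrow : ∀ x, (∑ b, (P x b : ℂ))
          = (1 - (lam : ℂ)) * ((Em x ⊗ₖ 1) * σ).trace + (lam : ℂ) * (s x : ℂ) := by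
        intro x
        have h1 : ∑ b, (P x b : ℂ) = ((noisyEffect lam (Em x) ⊗ₖ
            (1 : Matrix (Fin d) (Fin d) ℂ)) * σ).trace := by
          rw [← hNsum Fm hFsum, hkron_sum_r, Finset.sum_mul, Matrix.trace_sum]
          exact Finset.sum_congr rfl fun b _ => hgen x b
        have h2 := hexp (Em x) 1 (1 - lam) (lam * s x) 1 0
        simp only [Complex.ofReal_one, Complex.ofReal_zero, one_smul, zero_smul, add_zero,
          mul_zero, mul_one, zero_mul, hT11] at h2
        rw [h1, hNiE x, h2]
        push_cast
        ring
      have hcol : ∀ y, (∑ a, (P a y : ℂ))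
          = (1 - (lam : ℂ)) * (((1 : Matrix (Fin d) (Fin d) ℂ) ⊗ₖ Fm y) * σ).trace
            + (lam : ℂ) * (t y : ℂ) := by
        intro y
        have h1 : ∑ a, (P a y : ℂ) = (((1 : Matrix (Fin d) (Fin d) ℂ) ⊗ₖ
            noisyEffect lam (Fm y)) * σ).trace := by
          rw [← hNsum Em hEsum, hkron_sum_l, Finset.sum_mul, Matrix.trace_sum]
          exact Finset.sum_congr rfl fun a _ => hgen a y
        have h2 := hexp 1 (Fm y) 1 0 (1 - lam) (lam * t y)
        simp only [Complex.ofReal_one, Complex.ofReal_zero, one_smul, zero_smul, add_zero,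
          mul_zero, mul_one, zero_mul, one_mul, hT11] at h2
        rw [h1, hNiF y, h2]
        push_cast
        ring
      have hTnn : ∀ x y, (0:ℂ) ≤ ((Em x ⊗ₖ Fm y) * σ).trace :=
        fun x y => trace_mul_nonneg_of_psd (psd_kron (hEpsd x) (hFpsd y)) hσpsd
      have hspos : ∀ x, 0 < s x := by
        intro x
        have h0 := trace_nonneg_of_psd (hEpsd x)
        rw [Complex.nonneg_iff] at h0
        rcases lt_or_eq_of_le h0.1 with h | h
        · exact div_pos h hdR
        · exfalso
          have hE0 : Em x = 0 := psd_eq_zero_of_trace_eq_zero (hEpsd x) (by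
            rw [htr_real _ (hEpsd x), ← h]; simp)
          obtain ⟨y0⟩ := Fin.pos_iff_nonempty.mp hn
          have hg := hgen x y0
          rw [hE0] at hg
          simp [noisyEffect] at hg
          exact (hpos x y0).ne' hg
      have htpos : ∀ y, 0 < t y := by
        intro y
        have h0 := trace_nonneg_of_psd (hFpsd y)
        rw [Complex.nonneg_iff] at h0
        rcases lt_or_eq_of_le h0.1 with h | h
        · exact div_pos h hdR
        · exfalso
          have hF0 : Fm y = 0 := psd_eq_zero_of_trace_eq_zero (hFpsd y) (by
            rw [htr_real _ (hFpsd y), ← h]; simp)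
          obtain ⟨x0⟩ := Fin.pos_iff_nonempty.mp hn
          have hg := hgen x0 y
          rw [hF0] at hg
          simp [noisyEffect] at hg
          exact (hpos x0 y).ne' hg
      refine ⟨s, t, hspos, htpos, ?_, ?_, ?_⟩
      · have h1 : ∑ x, (Em x).trace = (d : ℂ) := by
          rw [← Matrix.trace_sum, hEsum, Matrix.trace_one]
          simp
        have h2 := congrArg Complex.re h1
        rw [Complex.re_sum] at h2
        simp only [Complex.natCast_re] at h2
        rw [hs]
        rw [← Finset.sum_div, h2]
        field_simp
      · have h1 : ∑ y, (Fm y).trace = (d : ℂ) := by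
          rw [← Matrix.trace_sum, hFsum, Matrix.trace_one]
          simp
        have h2 := congrArg Complex.re h1
        rw [Complex.re_sum] at h2
        simp only [Complex.natCast_re] at h2
        rw [ht]
        rw [← Finset.sum_div, h2]
        field_simp
      · intro x y
        have h1 := hgen' x y
        have h2 := hrow x
        have h3 := hcol y
        have hkey : ((Phat P lam s t x y : ℝ) : ℂ)
            = ((((1 - lam) * (1 - lam) : ℝ)) : ℂ) * ((Em x ⊗ₖ Fm y) * σ).trace := by
          rw [Phat]
          push_cast
          linear_combination h1 - ((lam : ℂ) * ((s x : ℝ) : ℂ)) * h3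
            - ((lam : ℂ) * ((t y : ℝ) : ℂ)) * h2
        have h4 := hTnn x y
        rw [Complex.nonneg_iff] at h4
        have h5 := congrArg Complex.re hkey
        rw [Complex.ofReal_re, Complex.re_ofReal_mul] at h5
        rw [h5]
        exact mul_nonneg (mul_self_nonneg _) h4.1
  · rintro ⟨s, t, hspos, htpos, hssum, htsum, hPh⟩
    have h1l : (0:ℝ) < 1 - lam := by linarith
    have hne : (1 - lam : ℝ) ≠ 0 := h1l.ne'
    have hmex : ∃ m : ℕ, 0 < m ∧ ∀ x : Fin n, 1 ≤ (m : ℝ) * s x ∧ 1 ≤ (m : ℝ) * t x := by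
      haveI : Nonempty (Fin n) := Fin.pos_iff_nonempty.mp hn
      obtain ⟨m, hm⟩ := exists_nat_ge (Finset.univ.sup' Finset.univ_nonempty
        (fun x : Fin n => max (1 / s x) (1 / t x)))
      refine ⟨m + 1, Nat.succ_pos m, fun x => ?_⟩
      have hx := Finset.le_sup' (fun x : Fin n => max (1 / s x) (1 / t x)) (Finset.mem_univ x)
      have hms : 1 / s x ≤ (m : ℝ) + 1 :=
        le_trans (le_trans (le_max_left _ _) hx) (by linarith)
      have hmt : 1 / t x ≤ (m : ℝ) + 1 :=
        le_trans (le_trans (le_max_right _ _) hx) (by linarith)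
      rw [div_le_iff₀ (hspos x)] at hms
      rw [div_le_iff₀ (htpos x)] at hmt
      constructor
      · push_cast; linarith
      · push_cast; linarith
    obtain ⟨m, hmpos, hm⟩ := hmex
    have hm0 : m ≠ 0 := hmpos.ne'
    have hs1 : ∀ x, 1 ≤ ((n : ℝ) + m) * s x := by
      intro x
      calc (1:ℝ) ≤ (m : ℝ) * s x := (hm x).1
        _ ≤ ((n : ℝ) + m) * s x := by
            apply mul_le_mul_of_nonneg_right _ (hspos x).le
            have : (0:ℝ) ≤ (n : ℝ) := Nat.cast_nonneg n
            linarith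
    have ht1 : ∀ y, 1 ≤ ((n : ℝ) + m) * t y := by
      intro y
      calc (1:ℝ) ≤ (m : ℝ) * t y := (hm y).2
        _ ≤ ((n : ℝ) + m) * t y := by
            apply mul_le_mul_of_nonneg_right _ (htpos y).le
            have : (0:ℝ) ≤ (n : ℝ) := Nat.cast_nonneg n
            linarith
    -- the classical correlation Q
    set Q : Fin n → Fin n → ℝ := fun x y => Phat P lam s t x y / (1 - lam)^2 with hQ
    have hQ0 : ∀ x y, 0 ≤ Q x y := fun x y => div_nonneg (hPh x y) (by positivity)
    have htot' : ∑ b, ∑ a, P a b = 1 := by rw [Finset.sum_comm]; exact hsum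
    have hProw : ∀ x, ∑ b, Phat P lam s t x b = (1 - lam) * ((∑ b, P x b) - lam * s x) := by
      intro x
      simp only [Phat]
      have e1 : ∑ b, lam * s x * (∑ a, P a b) = lam * s x := by
        rw [← Finset.mul_sum, htot', mul_one]
      have e2 : ∑ b, lam * t b * (∑ c, P x c) = lam * (∑ c, P x c) := by
        rw [← Finset.sum_mul, ← Finset.mul_sum, htsum, mul_one]
      have e3 : ∑ b, lam ^ 2 * s x * t b = lam ^ 2 * s x := by
        rw [← Finset.mul_sum, htsum, mul_one]
      rw [Finset.sum_add_distrib, Finset.sum_sub_distrib, Finset.sum_sub_distrib, e1, e2, e3]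
      ring
    have hPcol : ∀ y, ∑ a, Phat P lam s t a y = (1 - lam) * ((∑ a, P a y) - lam * t y) := by
      intro y
      simp only [Phat]
      have e1 : ∑ a, lam * s a * (∑ c, P c y) = lam * (∑ c, P c y) := by
        have : ∀ a, lam * s a * (∑ c, P c y) = (∑ c, P c y) * (lam * s a) := fun a => by ring
        simp only [this]
        rw [← Finset.mul_sum, ← Finset.mul_sum, hssum, mul_one, mul_comm]
      have e2 : ∑ a, lam * t y * (∑ c, P a c) = lam * t y := by
        rw [← Finset.mul_sum, hsum, mul_one]
      have e3 : ∑ a, lam ^ 2 * s a * t y = lam ^ 2 * t y := by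
        have : ∀ a, lam ^ 2 * s a * t y = (lam ^ 2 * t y) * s a := fun a => by ring
        simp only [this]
        rw [← Finset.mul_sum, hssum, mul_one]
      rw [Finset.sum_add_distrib, Finset.sum_sub_distrib, Finset.sum_sub_distrib, e1, e2, e3]
      ring
    have hQrow : ∀ x, ∑ b, Q x b = ((∑ b, P x b) - lam * s x) / (1 - lam) := by
      intro x
      simp only [hQ]
      rw [← Finset.sum_div, hProw x]
      field_simp
    have hQcol : ∀ y, ∑ a, Q a y = ((∑ a, P a y) - lam * t y) / (1 - lam) := by
      intro y
      simp only [hQ]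
      rw [← Finset.sum_div, hPcol y]
      field_simp
    have hQtot : ∑ x, ∑ y, Q x y = 1 := by
      simp only [hQ]
      simp_rw [← Finset.sum_div]
      have hPtot : ∑ x, ∑ y, Phat P lam s t x y = (1 - lam)^2 := by
        rw [Finset.sum_congr rfl fun x (_ : x ∈ Finset.univ) => hProw x,
          ← Finset.mul_sum, Finset.sum_sub_distrib, hsum, ← Finset.mul_sum, hssum]
        ring
      rw [hPtot]
      field_simp
    -- the key scalar identity
    have hkey : ∀ x y, ∑ x' : Fin n, ∑ y' : Fin n,
        ((1 - lam) * (if x' = x then (1:ℝ) else 0) + lam * s x)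
          * ((1 - lam) * (if y' = y then (1:ℝ) else 0) + lam * t y) * Q x' y' = P x y := by
      intro x y
      have expand : ∀ x' y' : Fin n,
          ((1 - lam) * (if x' = x then (1:ℝ) else 0) + lam * s x)
            * ((1 - lam) * (if y' = y then (1:ℝ) else 0) + lam * t y) * Q x' y'
          = ((1 - lam) * (1 - lam))
              * ((if x' = x then (1:ℝ) else 0) * ((if y' = y then (1:ℝ) else 0) * Q x' y'))
            + ((1 - lam) * (lam * t y)) * ((if x' = x then (1:ℝ) else 0) * Q x' y')
            + ((lam * s x) * (1 - lam)) * ((if y' = y then (1:ℝ) else 0) * Q x' y')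
            + ((lam * s x) * (lam * t y)) * Q x' y' := fun x' y' => by ring
      simp only [expand, Finset.sum_add_distrib, ← Finset.mul_sum]
      simp only [ite_mul, one_mul, zero_mul, Finset.sum_ite_eq', Finset.mem_univ, if_true]
      rw [hQrow x, hQcol y, hQtot]
      simp only [hQ, Phat]
      field_simp
      ring
    -- construct the quantum realization
    refine ⟨n + m, Matrix.diagonal (fun p : Fin (n+m) × Fin (n+m) =>
        ((∑ x' : Fin n, ∑ y' : Fin n,
          if p = (Fin.castAdd m x', Fin.castAdd m y') then Q x' y' else 0 : ℝ) : ℂ)),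
      fun x => Matrix.diagonal (fun i => ((bDiag n m s x i : ℝ) : ℂ)),
      fun y => Matrix.diagonal (fun i => ((bDiag n m t y i : ℝ) : ℂ)),
      ?_, ?_, ?_, ?_, ?_⟩
    · rw [Matrix.posSemidef_diagonal_iff]
      intro p
      rw [Complex.zero_le_real]
      exact Finset.sum_nonneg fun x' _ => Finset.sum_nonneg fun y' _ => by
        split_ifs
        · exact hQ0 x' y'
        · exact le_refl 0
    · rw [Matrix.trace_diagonal]
      have hre : ∑ p : Fin (n+m) × Fin (n+m), (∑ x' : Fin n, ∑ y' : Fin n,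
          if p = (Fin.castAdd m x', Fin.castAdd m y') then Q x' y' else 0) = 1 := by
        rw [Finset.sum_comm]
        calc ∑ x' : Fin n, ∑ p : Fin (n+m) × Fin (n+m), ∑ y' : Fin n,
              (if p = (Fin.castAdd m x', Fin.castAdd m y') then Q x' y' else 0)
            = ∑ x' : Fin n, ∑ y' : Fin n, ∑ p : Fin (n+m) × Fin (n+m),
              (if p = (Fin.castAdd m x', Fin.castAdd m y') then Q x' y' else 0) := by
              exact Finset.sum_congr rfl fun x' _ => Finset.sum_comm
          _ = ∑ x' : Fin n, ∑ y' : Fin n, Q x' y' := by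
              refine Finset.sum_congr rfl fun x' _ => Finset.sum_congr rfl fun y' _ => ?_
              rw [Finset.sum_ite_eq' Finset.univ
                ((Fin.castAdd m x', Fin.castAdd m y') : Fin (n+m) × Fin (n+m))]
              simp
          _ = 1 := hQtot
      exact_mod_cast hre
    · exact ⟨(bDiag_povm n m hm0 s hssum hs1).1, (bDiag_povm n m hm0 s hssum hs1).2⟩
    · exact ⟨(bDiag_povm n m hm0 t htsum ht1).1, (bDiag_povm n m hm0 t htsum ht1).2⟩
    · intro x y
      rw [noisy_bDiag lam n m hm0 s x, noisy_bDiag lam n m hm0 t y, trace_diag_kron_mul]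
      have step : ∀ p : Fin (n+m) × Fin (n+m),
          (((1 - lam) * bDiag n m s x p.1 + lam * s x : ℝ) : ℂ)
            * (((1 - lam) * bDiag n m t y p.2 + lam * t y : ℝ) : ℂ)
            * ((∑ x' : Fin n, ∑ y' : Fin n,
                if p = (Fin.castAdd m x', Fin.castAdd m y') then Q x' y' else 0 : ℝ) : ℂ)
          = ∑ x' : Fin n, ∑ y' : Fin n,
              (if p = (Fin.castAdd m x', Fin.castAdd m y') then
                (((1 - lam) * bDiag n m s x p.1 + lam * s x : ℝ) : ℂ)
                  * (((1 - lam) * bDiag n m t y p.2 + lam * t y : ℝ) : ℂ)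
                  * ((Q x' y' : ℝ) : ℂ) else 0) := by
        intro p
        push_cast
        rw [Finset.mul_sum]
        refine Finset.sum_congr rfl fun x' _ => ?_
        rw [Finset.mul_sum]
        refine Finset.sum_congr rfl fun y' _ => ?_
        split_ifs
        · ring
        · simp
      rw [Finset.sum_congr rfl fun p (_ : p ∈ Finset.univ) => step p]
      rw [Finset.sum_comm]
      have swap2 : ∀ x' : Fin n, ∑ p : Fin (n+m) × Fin (n+m), ∑ y' : Fin n,
          (if p = (Fin.castAdd m x', Fin.castAdd m y') then
            (((1 - lam) * bDiag n m s x p.1 + lam * s x : ℝ) : ℂ)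
              * (((1 - lam) * bDiag n m t y p.2 + lam * t y : ℝ) : ℂ)
              * ((Q x' y' : ℝ) : ℂ) else 0)
          = ∑ y' : Fin n,
            (((1 - lam) * bDiag n m s x (Fin.castAdd m x') + lam * s x : ℝ) : ℂ)
              * (((1 - lam) * bDiag n m t y (Fin.castAdd m y') + lam * t y : ℝ) : ℂ)
              * ((Q x' y' : ℝ) : ℂ) := by
        intro x'
        rw [Finset.sum_comm]
        refine Finset.sum_congr rfl fun y' _ => ?_
        rw [Finset.sum_ite_eq' Finset.univ
          ((Fin.castAdd m x', Fin.castAdd m y') : Fin (n+m) × Fin (n+m))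
          (fun p => (((1 - lam) * bDiag n m s x p.1 + lam * s x : ℝ) : ℂ)
            * (((1 - lam) * bDiag n m t y p.2 + lam * t y : ℝ) : ℂ) * ((Q x' y' : ℝ) : ℂ))]
        simp
      rw [Finset.sum_congr rfl fun x' (_ : x' ∈ Finset.univ) => swap2 x']
      simp only [bDiag_castAdd]
      rw [show ((P x y : ℝ) : ℂ) = ((P x y : ℝ) : ℂ) from rfl]
      rw [← hkey x y]
      push_cast
      ring


end
end

section
/- Let P be an n×n real matrix with nonnegative entries summing to 1. If the (real) rank of P is at least 2, then there exist indices x₀, y₀ ∈ {1,…,n} such that (∑_{b=1}^n P(x₀,b))·(∑_{a=1}^n P(a,y₀)) − P(x₀,y₀) > 0. Consequently, the upper bound 1 − max_{φ ∈ S_n} ∑_x √(max{0, (∑_b P(x,b))(∑_a P(a,φ(x))) − P(x,φ(x))}) on admissible noise strengths is strictly less than 1. -/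
open Matrix BigOperators Finset
open scoped Kronecker ComplexOrder

noncomputable section

/-- if a correlation has rank at least 2, then some entry is strictly
dominated by the product of its marginals, and consequently the upper bound on
admissible noise strengths is strictly less than 1. -/
theorem exists_positive_margin_and_bound_lt_one
    {n : ℕ} (P : Matrix (Fin n) (Fin n) ℝ)
    (hnn : ∀ x y, 0 ≤ P x y) (hsum : ∑ x, ∑ y, P x y = 1)
    (hrank : 2 ≤ P.rank) :
    (∃ x₀ y₀ : Fin n, 0 < (∑ b, P x₀ b) * (∑ a, P a y₀) - P x₀ y₀) ∧
    1 - (Finset.univ.sup' ⟨1, Finset.mem_univ (1 : Equiv.Perm (Fin n))⟩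
      (fun φ : Equiv.Perm (Fin n) =>
        ∑ x, Real.sqrt (max 0 ((∑ b, P x b) * (∑ a, P a (φ x)) - P x (φ x))))) < 1 := by
  have key : ∃ x₀ y₀ : Fin n, 0 < (∑ b, P x₀ b) * (∑ a, P a y₀) - P x₀ y₀ := by
    by_contra h
    push_neg at h
    have heq : ∀ x y : Fin n, P x y = (∑ b, P x b) * (∑ a, P a y) := by
      have hz : ∑ x, ∑ y, (P x y - (∑ b, P x b) * (∑ a, P a y)) = 0 := by
        have h1 : ∑ x, ∑ y, (∑ b, P x b) * (∑ a, P a y) = 1 := by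
          rw [← Finset.sum_mul_sum]
          rw [show (∑ x, ∑ b, P x b) = 1 from hsum,
            show (∑ y, ∑ a, P a y) = 1 from by rw [Finset.sum_comm]; exact hsum]
          ring
        simp [Finset.sum_sub_distrib, hsum, h1]
      have hnn' : ∀ x ∈ Finset.univ, (0:ℝ) ≤ ∑ y, (P x y - (∑ b, P x b) * (∑ a, P a y)) := by
        intro x _
        exact Finset.sum_nonneg fun y _ => by linarith [h x y]
      have hrow : ∀ x ∈ Finset.univ, ∑ y, (P x y - (∑ b, P x b) * (∑ a, P a y)) = 0 :=
        (Finset.sum_eq_zero_iff_of_nonneg hnn').mp hz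
      intro x y
      have := (Finset.sum_eq_zero_iff_of_nonneg
        (fun y _ => by linarith [h x y] : ∀ y ∈ Finset.univ,
          (0:ℝ) ≤ P x y - (∑ b, P x b) * (∑ a, P a y))).mp (hrow x (Finset.mem_univ x))
        y (Finset.mem_univ y)
      linarith
    have hPeq : P = (Matrix.of fun x (_ : Fin 1) => ∑ b, P x b) *
        (Matrix.of fun (_ : Fin 1) y => ∑ a, P a y) := by
      ext x y
      simp [Matrix.mul_apply, heq x y]
    have : P.rank ≤ 1 := by
      rw [hPeq]
      exact (Matrix.rank_mul_le_left _ _).trans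
        ((Matrix.rank_le_card_width _).trans (by simp))
    omega
  refine ⟨key, ?_⟩
  obtain ⟨x₀, y₀, hpos⟩ := key
  have hφ : (Equiv.swap x₀ y₀) x₀ = y₀ := Equiv.swap_apply_left x₀ y₀
  set f : Equiv.Perm (Fin n) → ℝ := fun φ =>
    ∑ x, Real.sqrt (max 0 ((∑ b, P x b) * (∑ a, P a (φ x)) - P x (φ x))) with hf
  have hterm : 0 < Real.sqrt (max 0 ((∑ b, P x₀ b) * (∑ a, P a y₀) - P x₀ y₀)) :=
    Real.sqrt_pos.mpr (lt_max_of_lt_right hpos)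
  have hge : Real.sqrt (max 0 ((∑ b, P x₀ b) * (∑ a, P a y₀) - P x₀ y₀)) ≤
      f (Equiv.swap x₀ y₀) := by
    rw [hf]
    have := Finset.single_le_sum
      (f := fun x => Real.sqrt (max 0 ((∑ b, P x b) * (∑ a, P a ((Equiv.swap x₀ y₀) x))
        - P x ((Equiv.swap x₀ y₀) x))))
      (fun x _ => Real.sqrt_nonneg _) (Finset.mem_univ x₀)
    rw [hφ] at this
    simpa using this
  have hsup : f (Equiv.swap x₀ y₀) ≤ Finset.univ.sup'
      ⟨1, Finset.mem_univ (1 : Equiv.Perm (Fin n))⟩ f :=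
    Finset.le_sup' f (Finset.mem_univ _)
  have : 0 < Finset.univ.sup' ⟨1, Finset.mem_univ (1 : Equiv.Perm (Fin n))⟩ f :=
    lt_of_lt_of_le hterm (hge.trans hsup)
  linarith

end
end

section
/- Let P be an n×n correlation with strictly positive entries and let 0 ≤ λ < 1. If P admits an 𝔈_λ-PSD factorization of size r, then P can be generated with local dimension r under depolarizing noise of strength λ. In particular, the minimal local dimension C_λ(P) of a noisy quantum protocol generating P satisfies C_λ(P) ≤ rank_psd^{𝔈_λ}(P), the minimal size of an 𝔈_λ-PSD factorization of P. -/
open Matrix BigOperators Finset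
open scoped Kronecker ComplexOrder

noncomputable section

lemma aux_psd_smul {m : Type*} [Fintype m] {M : Matrix m m ℂ} (hM : M.PosSemidef)
    {c : ℝ} (hc : 0 ≤ c) : ((c : ℂ) • M).PosSemidef := by
  refine Matrix.PosSemidef.of_dotProduct_mulVec_nonneg ?_ ?_
  · have : ((c:ℂ) • M)ᴴ = star (c:ℂ) • Mᴴ := Matrix.conjTranspose_smul _ _
    rw [Matrix.IsHermitian, this, hM.1.eq]
    congr 1
    simp [Complex.star_def, Complex.conj_ofReal]
  · intro x
    rw [Matrix.smul_mulVec, dotProduct_smul, smul_eq_mul]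
    exact mul_nonneg (by exact_mod_cast Complex.zero_le_real.mpr hc) (hM.dotProduct_mulVec_nonneg x)

lemma aux_outerProj_psd {α : Type*} [Fintype α] (ψ : α → ℂ) : (outerProj ψ).PosSemidef := by
  refine Matrix.PosSemidef.of_dotProduct_mulVec_nonneg ?_ ?_
  · ext i j
    simp [outerProj, Matrix.conjTranspose_apply, mul_comm]
  · intro x
    have : dotProduct (star x) (outerProj ψ *ᵥ x)
        = star (∑ j, star (ψ j) * x j) * (∑ j, star (ψ j) * x j) := by
      simp only [dotProduct, Matrix.mulVec, dotProduct, outerProj,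
        Matrix.of_apply, Pi.star_apply, starRingEnd_apply, star_sum, star_mul', star_star,
        Finset.mul_sum, Finset.sum_mul]
      rw [Finset.sum_comm]
      refine Finset.sum_congr rfl fun i _ => Finset.sum_congr rfl fun j _ => by ring
    rw [this]
    exact star_mul_self_nonneg _

lemma trace_kron_outer {r : ℕ} (X Y M : Matrix (Fin r) (Fin r) ℂ) :
    ((X ⊗ₖ Y) * outerProj (fun p : Fin r × Fin r => M p.1 p.2)).trace
      = (X * M * Yᵀ * Mᴴ).trace := by
  simp only [Matrix.trace, Matrix.diag, Matrix.mul_apply, Matrix.kroneckerMap_apply,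
    outerProj, Matrix.of_apply, Matrix.transpose_apply, Matrix.conjTranspose_apply,
    Fintype.sum_prod_type, Finset.mul_sum, Finset.sum_mul, starRingEnd_apply]
  refine Finset.sum_congr rfl fun i _ => Finset.sum_congr rfl fun j _ => ?_
  conv_lhs => rw [Finset.sum_comm]
  refine Finset.sum_congr rfl fun k _ => Finset.sum_congr rfl fun l _ => ?_
  ring

lemma noisyEffect_transpose {d : ℕ} (lam : ℝ) (E : Matrix (Fin d) (Fin d) ℂ) :
    noisyEffect lam Eᵀ = (noisyEffect lam E)ᵀ := by
  simp [noisyEffect, Matrix.transpose_add, Matrix.transpose_smul, Matrix.trace_transpose]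

lemma povm_exists {r n : ℕ} (hr : (r : ℂ) ≠ 0) {lam : ℝ} (hlam0 : 0 ≤ lam) (hlam1 : lam < 1)
    (C : Fin n → Matrix (Fin r) (Fin r) ℂ) (hC : ∀ x, (C x).PosSemidef)
    (R : Matrix (Fin r) (Fin r) ℂ) (hRH : R.IsHermitian) (hRdet : IsUnit R.det)
    (hRR : R * R = ∑ k, C k)
    (hCE : ∀ x, (C x - (((lam : ℂ) / r) * (C x * (∑ k, C k)⁻¹).trace) • (∑ k, C k)).PosSemidef) :
    ∃ E : Fin n → Matrix (Fin r) (Fin r) ℂ, IsPOVM E ∧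
      ∀ x, noisyEffect lam (E x) = R⁻¹ * C x * R⁻¹ := by
  have hμ : ((1 - lam : ℝ) : ℂ) ≠ 0 :=
    Complex.ofReal_ne_zero.mpr (sub_ne_zero.mpr hlam1.ne')
  set ν : ℂ := (((1 - lam)⁻¹ : ℝ) : ℂ) with hνdef
  have hνμ : ν * ((1 - lam : ℝ) : ℂ) = 1 := by
    rw [hνdef, ← Complex.ofReal_mul, inv_mul_cancel₀ (sub_ne_zero.mpr hlam1.ne'), Complex.ofReal_one]
  have hRiH : (R⁻¹).IsHermitian := hRH.inv
  have hRiR : R⁻¹ * R = 1 := Matrix.nonsing_inv_mul R hRdet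
  have hRRi : R * R⁻¹ = 1 := Matrix.mul_nonsing_inv R hRdet
  have hSinv : (∑ k, C k)⁻¹ = R⁻¹ * R⁻¹ := by rw [← hRR, Matrix.mul_inv_rev]
  set A : Fin n → Matrix (Fin r) (Fin r) ℂ := fun x => R⁻¹ * C x * R⁻¹ with hAdef
  have hRSR : R⁻¹ * (R * R) * R⁻¹ = 1 := by
    rw [← Matrix.mul_assoc, hRiR, Matrix.one_mul, hRRi]
  have hRSR' : R⁻¹ * (∑ k, C k) * R⁻¹ = 1 := by rw [← hRR]; exact hRSR
  have htA : ∀ x, (A x).trace = (C x * (∑ k, C k)⁻¹).trace := by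
    intro x
    rw [hSinv, hAdef]
    rw [Matrix.trace_mul_comm (R⁻¹ * C x) R⁻¹, ← Matrix.mul_assoc,
      Matrix.trace_mul_comm (R⁻¹ * R⁻¹) (C x)]
  have hAsum : ∑ x, A x = 1 := by
    rw [hAdef, ← Finset.sum_mul, ← Finset.mul_sum, ← hRR, hRSR]
  have htAsum : ∑ x, (A x).trace = (r : ℂ) := by
    rw [← Matrix.trace_sum, hAsum, Matrix.trace_one]
    simp
  have hG : ∀ x, (A x - (((lam : ℂ) / r) * (A x).trace) • 1).PosSemidef := by
    intro x
    have h1 := (hCE x).mul_mul_conjTranspose_same R⁻¹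
    have h2 : R⁻¹ * (C x - (((lam : ℂ) / r) * (C x * (∑ k, C k)⁻¹).trace) • (∑ k, C k)) * (R⁻¹)ᴴ
        = A x - (((lam : ℂ) / r) * (A x).trace) • 1 := by
      rw [hRiH.eq, Matrix.mul_sub, Matrix.sub_mul, Matrix.mul_smul, Matrix.smul_mul,
        hRSR', ← htA x]
    rwa [h2] at h1
  have htG : ∀ x, (A x - (((lam : ℂ) / r) * (A x).trace) • 1).trace
      = ((1 - lam : ℝ) : ℂ) * (A x).trace := by
    intro x
    simp only [Matrix.trace_sub, Matrix.trace_smul, Matrix.trace_one, Fintype.card_fin, smul_eq_mul]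
    push_cast
    field_simp
  refine ⟨fun x => ν • (A x - (((lam : ℂ) / r) * (A x).trace) • 1), ⟨?_, ?_⟩, ?_⟩
  · intro x
    exact aux_psd_smul (hG x) (inv_nonneg.mpr (sub_nonneg.mpr hlam1.le))
  · rw [← Finset.smul_sum]
    rw [Finset.sum_sub_distrib, hAsum, ← Finset.sum_smul, ← Finset.mul_sum, htAsum,
      div_mul_cancel₀ _ hr]
    have h3 : (1 : Matrix (Fin r) (Fin r) ℂ) - (lam : ℂ) • 1 = ((1 - lam : ℝ) : ℂ) • 1 := by
      push_cast
      rw [sub_smul, one_smul]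
    rw [h3, smul_smul, hνμ, one_smul]
  · intro x
    have htE : (ν • (A x - (((lam : ℂ) / r) * (A x).trace) • 1)).trace = (A x).trace := by
      rw [Matrix.trace_smul, htG x, smul_eq_mul, ← mul_assoc, hνμ, one_mul]
    rw [noisyEffect, htE]
    rw [smul_smul, mul_comm _ ν, hνμ, one_smul]
    have h4 : ((lam : ℂ) / r) * (A x).trace = (lam : ℂ) * (A x).trace / r := by ring
    rw [h4, sub_add_cancel, hAdef]

open scoped MatrixOrder in
lemma exists_herm_sqrt {r : ℕ} (S : Matrix (Fin r) (Fin r) ℂ) (hS : S.PosSemidef) :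
    ∃ R : Matrix (Fin r) (Fin r) ℂ, R.IsHermitian ∧ R * R = S :=
  ⟨CFC.sqrt S, (CFC.sqrt_nonneg S).posSemidef.1, CFC.sqrt_mul_sqrt_self S hS.nonneg⟩

/-- an 𝔈_λ-PSD factorization of size r of a correlation P yields a noisy
quantum protocol generating P with local dimension r; in particular
C_λ(P) ≤ rank_psd^{𝔈_λ}(P). -/
theorem generates_of_ElPsdFactorization
    {n : ℕ} (P : Matrix (Fin n) (Fin n) ℝ)
    (hpos : ∀ x y, 0 < P x y) (hsum : ∑ x, ∑ y, P x y = 1)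
    (lam : ℝ) (hlam0 : 0 ≤ lam) (hlam1 : lam < 1)
    (r : ℕ) (C D : Fin n → Matrix (Fin r) (Fin r) ℂ)
    (hfact : IsElPsdFactorization P lam r C D) :
    GeneratesWithNoise P lam r := by
  obtain ⟨hC, hD, hP, hSu, hTu, hCE, hDE⟩ := hfact
  have hn : 0 < n := by
    rcases Nat.eq_zero_or_pos n with h | h
    · subst h; simp at hsum
    · exact h
  have hrn : r ≠ 0 := by
    intro h
    subst h
    have h0 := hP ⟨0, hn⟩ ⟨0, hn⟩
    rw [show ((C ⟨0, hn⟩ * D ⟨0, hn⟩).trace : ℂ) = 0 from by simp [Matrix.trace]] at h0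
    exact (hpos ⟨0, hn⟩ ⟨0, hn⟩).ne' (by exact_mod_cast h0)
  have hr : (r : ℂ) ≠ 0 := Nat.cast_ne_zero.mpr hrn
  -- square roots
  have hS : (∑ k, C k).PosSemidef :=
    Finset.sum_induction C _ (fun a b ha hb => ha.add hb) Matrix.PosSemidef.zero
      (fun x _ => hC x)
  have hT : (∑ k, D k).PosSemidef :=
    Finset.sum_induction D _ (fun a b ha hb => ha.add hb) Matrix.PosSemidef.zero
      (fun y _ => hD y)
  obtain ⟨R, hRH, hRR⟩ := exists_herm_sqrt _ hS
  obtain ⟨W, hWH, hWW⟩ := exists_herm_sqrt _ hT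
  have hRdet : IsUnit R.det := by
    have h := (Matrix.isUnit_iff_isUnit_det _).mp hSu
    rw [← hRR, Matrix.det_mul] at h
    exact isUnit_of_mul_isUnit_left h
  have hWdet : IsUnit W.det := by
    have h := (Matrix.isUnit_iff_isUnit_det _).mp hTu
    rw [← hWW, Matrix.det_mul] at h
    exact isUnit_of_mul_isUnit_left h
  have hRiR : R⁻¹ * R = 1 := Matrix.nonsing_inv_mul R hRdet
  have hRRi : R * R⁻¹ = 1 := Matrix.mul_nonsing_inv R hRdet
  have hWiW : W⁻¹ * W = 1 := Matrix.nonsing_inv_mul W hWdet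
  have hWWi : W * W⁻¹ = 1 := Matrix.mul_nonsing_inv W hWdet
  obtain ⟨E, hEpovm, hNE⟩ := povm_exists hr hlam0 hlam1 C hC R hRH hRdet hRR hCE
  obtain ⟨F', hFpovm, hNF⟩ := povm_exists hr hlam0 hlam1 D hD W hWH hWdet hWW hDE
  refine ⟨outerProj (fun p : Fin r × Fin r => (R * W) p.1 p.2), E, fun y => (F' y)ᵀ,
    aux_outerProj_psd _, ?_, hEpovm, ⟨fun y => (hFpovm.1 y).transpose, ?_⟩, ?_⟩
  · -- trace of σ is 1
    have h1 : (outerProj (fun p : Fin r × Fin r => (R * W) p.1 p.2)).trace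
        = ((R * W) * (R * W)ᴴ).trace := by
      simp only [Matrix.trace, Matrix.diag, outerProj, Matrix.of_apply, Matrix.mul_apply,
        Matrix.conjTranspose_apply, Fintype.sum_prod_type, starRingEnd_apply]
    rw [h1]
    have h2 : (R * W) * (R * W)ᴴ = R * (W * W) * R := by
      rw [Matrix.conjTranspose_mul, hWH.eq, hRH.eq, Matrix.mul_assoc, Matrix.mul_assoc,
        Matrix.mul_assoc]
    rw [h2, hWW]
    have h3 : (R * (∑ k, D k) * R).trace = ((∑ k, C k) * (∑ k, D k)).trace := by
      rw [Matrix.trace_mul_comm (R * (∑ k, D k)) R, ← Matrix.mul_assoc, hRR,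
        Matrix.trace_mul_comm]
    rw [h3, Finset.sum_mul]
    rw [Matrix.trace_sum]
    have h4 : ∀ x, (C x * ∑ k, D k).trace = ∑ y, (C x * D y).trace := by
      intro x
      rw [Finset.mul_sum, Matrix.trace_sum]
    calc ∑ x, (C x * ∑ k, D k).trace = ∑ x, ∑ y, (C x * D y).trace :=
          Finset.sum_congr rfl fun x _ => h4 x
      _ = ∑ x, ∑ y, ((P x y : ℝ) : ℂ) := by
          refine Finset.sum_congr rfl fun x _ => Finset.sum_congr rfl fun y _ => (hP x y).symm
      _ = 1 := by exact_mod_cast hsum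
  · -- F is a POVM sum
    rw [← Matrix.transpose_sum, hFpovm.2, Matrix.transpose_one]
  · -- the correlation identity
    intro x y
    rw [hNE x, noisyEffect_transpose, hNF y, trace_kron_outer]
    rw [Matrix.transpose_transpose]
    have hH : (R * W)ᴴ = W * R := by rw [Matrix.conjTranspose_mul, hWH.eq, hRH.eq]
    rw [hH]
    have key : (R⁻¹ * C x * R⁻¹) * (R * W) * ((W⁻¹ * D y * W⁻¹)ᵀ)ᵀ * (W * R)
        = R⁻¹ * (C x * (D y * R)) := by
      rw [Matrix.transpose_transpose]
      simp only [Matrix.mul_assoc]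
      rw [show W⁻¹ * (W * R) = R from by rw [← Matrix.mul_assoc, hWiW, Matrix.one_mul]]
      rw [show W * (W⁻¹ * (D y * R)) = D y * R from by
        rw [← Matrix.mul_assoc, hWWi, Matrix.one_mul]]
      rw [show R⁻¹ * (R * (D y * R)) = D y * R from by
        rw [← Matrix.mul_assoc, hRiR, Matrix.one_mul]]
    rw [Matrix.transpose_transpose] at key
    rw [key]
    rw [Matrix.trace_mul_comm R⁻¹ (C x * (D y * R))]
    rw [Matrix.mul_assoc (C x) (D y * R) R⁻¹, Matrix.mul_assoc (D y) R R⁻¹, hRRi,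
      Matrix.mul_one]
    exact hP x y



end
end

section
/- Let P be an n×n correlation with strictly positive entries, n ≥ 2, let 0 ≤ λ < 1, and suppose s, t ∈ ℝ_{>0}^n with ‖s‖₁ = ‖t‖₁ = 1 satisfy P̂_λ^{s,t}(x,y) ≥ 0 for all x, y. Then P can be generated under depolarizing noise of strength λ with local dimension d = rank_psd(P̂_λ^{s,t}) · ⌈1 / min_{x,y}{s_x, t_y}⌉; in particular C_λ(P) ≤ rank_psd(P̂_λ^{s,t}) · ⌈1 / min_{x,y}{s_x, t_y}⌉. -/
open Matrix BigOperators Finset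
open scoped Kronecker ComplexOrder

noncomputable section

lemma aux_sum_dite {M : Type*} [AddCommMonoid M] {n d : ℕ} (hnd : n ≤ d) (g : Fin n → M) :
    ∑ i : Fin d, (if h : i.val < n then g ⟨i.val, h⟩ else 0) = ∑ x : Fin n, g x := by
  have h1 : ∑ i : Fin d, (if h : i.val < n then g ⟨i.val, h⟩ else 0)
      = ∑ i ∈ Finset.range d, (if h : i < n then g ⟨i, h⟩ else 0) :=
    Fin.sum_univ_eq_sum_range (fun i => if h : i < n then g ⟨i, h⟩ else 0) d
  have h2 : ∑ x : Fin n, g x = ∑ i ∈ Finset.range n, (if h : i < n then g ⟨i, h⟩ else 0) := by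
    rw [← Fin.sum_univ_eq_sum_range (fun i => if h : i < n then g ⟨i, h⟩ else 0) n]
    exact Finset.sum_congr rfl fun x _ => by simp [x.isLt]
  rw [h1, h2]
  exact (Finset.sum_subset (Finset.range_subset_range.mpr hnd)
    (fun i _ hi => by simp at hi; rw [dif_neg]; omega)).symm

lemma sumEf {n d : ℕ} (hn : 0 < n) (hnd : n ≤ d) (x : Fin n) (v : ℝ) (hv : d = n → v = 1) :
    ∑ i ∈ Finset.range d,
      (if i < n then (if i = (x : ℕ) then (1:ℝ) else 0) else (v - 1) / ((d:ℝ) - (n:ℝ))) = v := by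
  rw [Finset.range_eq_Ico, ← Finset.sum_Ico_consecutive _ (Nat.zero_le n) hnd]
  have h1 : ∑ i ∈ Finset.Ico 0 n,
      (if i < n then (if i = (x : ℕ) then (1:ℝ) else 0) else (v - 1) / ((d:ℝ) - (n:ℝ))) = 1 := by
    rw [← Finset.range_eq_Ico]
    rw [Finset.sum_congr rfl (fun i hi => if_pos (Finset.mem_range.mp hi))]
    rw [Finset.sum_ite_eq' (Finset.range n) (x : ℕ) (fun _ => (1:ℝ))]
    simp [x.isLt]
  rw [h1]
  rcases eq_or_lt_of_le hnd with h | h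
  · simp [← h, hv h.symm]
  · have h2 : ∑ i ∈ Finset.Ico n d,
        (if i < n then (if i = (x : ℕ) then (1:ℝ) else 0) else (v - 1) / ((d:ℝ) - (n:ℝ)))
        = (d - n : ℕ) * ((v - 1) / ((d:ℝ) - (n:ℝ))) := by
      rw [Finset.sum_congr rfl (fun i hi => by
        rw [if_neg]; exact not_lt.mpr (Finset.mem_Ico.mp hi).1)]
      rw [Finset.sum_const, Nat.card_Ico, nsmul_eq_mul]
    rw [h2]
    have hdn : (d:ℝ) - (n:ℝ) ≠ 0 := by
      have : (n:ℝ) < d := by exact_mod_cast h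
      linarith
    push_cast [Nat.cast_sub hnd]
    field_simp
    ring

lemma noisy_diag {d : ℕ} (hd : d ≠ 0) (lam : ℝ) (f : Fin d → ℝ) (v : ℝ)
    (hv : ∑ i, f i = d * v) :
    noisyEffect lam (Matrix.diagonal fun i => (f i : ℂ)) =
      Matrix.diagonal fun i => (((1 - lam) * f i + lam * v : ℝ) : ℂ) := by
  unfold noisyEffect
  rw [Matrix.trace_diagonal]
  have h1 : ∑ i, ((f i : ℝ) : ℂ) = ((d : ℝ) * v : ℂ) := by
    rw [← Complex.ofReal_sum, hv]; push_cast; ring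
  rw [h1]
  ext i j
  simp only [Matrix.add_apply, Matrix.smul_apply, Matrix.diagonal_apply, Matrix.one_apply]
  split_ifs with h
  · have hdc : (d : ℂ) ≠ 0 := Nat.cast_ne_zero.mpr hd
    push_cast
    field_simp
    ring
  · simp

lemma Phat_row {n : ℕ} (P : Matrix (Fin n) (Fin n) ℝ) (lam : ℝ) (s t : Fin n → ℝ)
    (ht1 : (∑ y, t y) = 1) (hsum : ∑ x, ∑ y, P x y = 1) (x : Fin n) :
    ∑ b, Phat P lam s t x b = (1 - lam) * ((∑ b, P x b) - lam * s x) := by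
  have hcol : ∑ b : Fin n, ∑ a : Fin n, P a b = 1 := by rw [Finset.sum_comm]; exact hsum
  unfold Phat
  rw [Finset.sum_add_distrib, Finset.sum_sub_distrib, Finset.sum_sub_distrib]
  rw [← Finset.mul_sum, hcol]
  have h2 : ∑ b : Fin n, lam * t b * (∑ b', P x b') = lam * (∑ b', P x b') := by
    rw [← Finset.sum_mul, ← Finset.mul_sum, ht1]; ring
  have h3 : ∑ b : Fin n, lam ^ 2 * s x * t b = lam ^ 2 * s x := by
    rw [← Finset.mul_sum, ht1]; ring
  rw [h2, h3]; ring

lemma Phat_col {n : ℕ} (P : Matrix (Fin n) (Fin n) ℝ) (lam : ℝ) (s t : Fin n → ℝ)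
    (hs1 : (∑ x, s x) = 1) (hsum : ∑ x, ∑ y, P x y = 1) (y : Fin n) :
    ∑ a, Phat P lam s t a y = (1 - lam) * ((∑ a, P a y) - lam * t y) := by
  unfold Phat
  rw [Finset.sum_add_distrib, Finset.sum_sub_distrib, Finset.sum_sub_distrib]
  have h1 : ∑ a : Fin n, lam * s a * (∑ a', P a' y) = lam * (∑ a', P a' y) := by
    rw [← Finset.sum_mul, ← Finset.mul_sum, hs1]; ring
  have h2 : ∑ a : Fin n, lam * t y * (∑ b, P a b) = lam * t y := by
    rw [← Finset.mul_sum, hsum]; ring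
  have h3 : ∑ a : Fin n, lam ^ 2 * s a * t y = lam ^ 2 * t y := by
    have : ∀ a, lam ^ 2 * s a * t y = lam ^ 2 * t y * s a := fun a => by ring
    rw [Finset.sum_congr rfl fun a _ => this a, ← Finset.mul_sum, hs1]; ring
  rw [h1, h2, h3]; ring

lemma Phat_tot {n : ℕ} (P : Matrix (Fin n) (Fin n) ℝ) (lam : ℝ) (s t : Fin n → ℝ)
    (hs1 : (∑ x, s x) = 1) (ht1 : (∑ y, t y) = 1) (hsum : ∑ x, ∑ y, P x y = 1) :
    ∑ x, ∑ y, Phat P lam s t x y = (1 - lam) ^ 2 := by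
  rw [Finset.sum_congr rfl fun x _ => Phat_row P lam s t ht1 hsum x]
  have : ∀ x : Fin n, (1 - lam) * ((∑ b, P x b) - lam * s x)
      = (1 - lam) * (∑ b, P x b) - (1 - lam) * lam * s x := fun x => by ring
  rw [Finset.sum_congr rfl fun x _ => this x, Finset.sum_sub_distrib,
    ← Finset.mul_sum, ← Finset.mul_sum, hs1, hsum]
  ring

lemma uniform_of_min {n : ℕ} (hn : 0 < n) (s : Fin n → ℝ) (hs1 : ∑ x, s x = 1)
    (h : ∀ x, 1 / (n : ℝ) ≤ s x) (x : Fin n) : s x = 1 / n := by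
  by_contra hx
  have hlt : 1 / (n : ℝ) < s x := lt_of_le_of_ne (h x) (Ne.symm hx)
  have : ∑ _y : Fin n, (1 / (n:ℝ)) < ∑ y, s y :=
    Finset.sum_lt_sum (fun i _ => h i) ⟨x, Finset.mem_univ x, hlt⟩
  rw [hs1, Finset.sum_const, Finset.card_univ, Fintype.card_fin, nsmul_eq_mul] at this
  have hn' : (n : ℝ) ≠ 0 := Nat.cast_ne_zero.mpr hn.ne'
  rw [mul_one_div, div_self hn'] at this
  exact lt_irrefl _ this

lemma key_double {M : Type*} [AddCommMonoid M] {n d : ℕ} (hnd : n ≤ d) (f : Fin n → Fin n → M) :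
    ∑ i : Fin d, ∑ j : Fin d,
      (if hi : i.val < n then if hj : j.val < n then f ⟨i.val, hi⟩ ⟨j.val, hj⟩ else 0 else 0)
    = ∑ a : Fin n, ∑ b : Fin n, f a b := by
  have h1 : ∀ i : Fin d, ∑ j : Fin d,
      (if hi : i.val < n then if hj : j.val < n then f ⟨i.val, hi⟩ ⟨j.val, hj⟩ else 0 else 0)
      = (if hi : i.val < n then
          ∑ j : Fin d, (if hj : j.val < n then f ⟨i.val, hi⟩ ⟨j.val, hj⟩ else 0) else 0) := by
    intro i
    split_ifs with h
    · rfl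
    · exact Finset.sum_const_zero
  rw [Finset.sum_congr rfl fun i _ => h1 i,
    aux_sum_dite hnd (fun a => ∑ j : Fin d, (if hj : j.val < n then f a ⟨j.val, hj⟩ else 0))]
  exact Finset.sum_congr rfl fun a _ => aux_sum_dite hnd (f a)

lemma hEsum_lemma {n d : ℕ} (hnd : n ≤ d) (s : Fin n → ℝ) (hs1 : (∑ x, s x) = 1)
    (i : Fin d) :
    ∑ x : Fin n, (if (i : ℕ) < n then (if (i : ℕ) = (x : ℕ) then (1:ℝ) else 0)
      else ((d:ℝ) * s x - 1) / ((d:ℝ) - (n:ℝ))) = 1 := by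
  by_cases hi : (i : ℕ) < n
  · rw [Finset.sum_congr rfl fun x _ => if_pos hi]
    have h2 : ∀ x : Fin n, (if (i : ℕ) = (x : ℕ) then (1:ℝ) else 0)
        = (if x = ⟨(i : ℕ), hi⟩ then (1:ℝ) else 0) := fun x => by
      simp [Fin.ext_iff, eq_comm]
    rw [Finset.sum_congr rfl fun x _ => h2 x,
      Finset.sum_ite_eq' Finset.univ (⟨(i : ℕ), hi⟩ : Fin n) (fun _ => (1:ℝ))]
    simp
  · have hlt : n < d := lt_of_le_of_lt (not_lt.mp hi) i.isLt
    have hdn : (d:ℝ) - (n:ℝ) ≠ 0 := by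
      have : (n:ℝ) < (d:ℝ) := by exact_mod_cast hlt
      linarith
    rw [Finset.sum_congr rfl fun x _ => if_neg hi, ← Finset.sum_div,
      Finset.sum_sub_distrib, ← Finset.mul_sum, hs1]
    rw [Finset.sum_const, Finset.card_univ, Fintype.card_fin, div_eq_one_iff_eq hdn]
    push_cast
    ring

lemma gen_main {n : ℕ} (hn : 2 ≤ n) (P : Matrix (Fin n) (Fin n) ℝ)
    (hsum : ∑ x, ∑ y, P x y = 1)
    (lam : ℝ) (hlam1 : lam < 1)
    (s t : Fin n → ℝ)
    (hs1 : (∑ x, s x) = 1) (ht1 : (∑ y, t y) = 1)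
    (hP : ∀ x y, 0 ≤ Phat P lam s t x y)
    (d : ℕ) (hnd : n ≤ d)
    (hds : ∀ x, 1 ≤ (d:ℝ) * s x) (hdt : ∀ y, 1 ≤ (d:ℝ) * t y)
    (hus : d = n → ∀ x, (d:ℝ) * s x = 1) (hut : d = n → ∀ y, (d:ℝ) * t y = 1) :
    GeneratesWithNoise P lam d := by
  classical
  have hn0 : 0 < n := by omega
  have hd0 : 0 < d := lt_of_lt_of_le hn0 hnd
  have hc : (1:ℝ) - lam ≠ 0 := by intro h; linarith
  have hc2 : (0:ℝ) < (1 - lam)^2 := by positivity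
  set c2 : ℝ := (1 - lam)^2 with hc2def
  -- the response functions
  set Ef : Fin n → ℕ → ℝ := fun x i =>
    if i < n then (if i = (x : ℕ) then 1 else 0) else ((d:ℝ) * s x - 1) / ((d:ℝ) - (n:ℝ))
    with hEf
  set Ff : Fin n → ℕ → ℝ := fun y j =>
    if j < n then (if j = (y : ℕ) then 1 else 0) else ((d:ℝ) * t y - 1) / ((d:ℝ) - (n:ℝ))
    with hFf
  set Qf : ℕ → ℕ → ℝ := fun i j =>
    if hi : i < n then (if hj : j < n then Phat P lam s t ⟨i, hi⟩ ⟨j, hj⟩ / c2 else 0) else 0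
    with hQf
  have hEnn : ∀ x i, 0 ≤ Ef x i := by
    intro x i
    rw [hEf]
    dsimp only
    split_ifs
    · exact zero_le_one
    · exact le_refl 0
    · apply div_nonneg
      · linarith [hds x]
      · have : (n:ℝ) ≤ (d:ℝ) := by exact_mod_cast hnd
        linarith
  have hFnn : ∀ y j, 0 ≤ Ff y j := by
    intro y j
    rw [hFf]
    dsimp only
    split_ifs
    · exact zero_le_one
    · exact le_refl 0
    · apply div_nonneg
      · linarith [hdt y]
      · have : (n:ℝ) ≤ (d:ℝ) := by exact_mod_cast hnd
        linarith
  have hQnn : ∀ i j, 0 ≤ Qf i j := by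
    intro i j
    rw [hQf]
    dsimp only
    split_ifs with hi hj
    · exact div_nonneg (hP _ _) (le_of_lt hc2)
    · exact le_refl 0
    · exact le_refl 0
  have htrE : ∀ x, ∑ i : Fin d, Ef x (i : ℕ) = (d:ℝ) * s x := by
    intro x
    rw [Fin.sum_univ_eq_sum_range (fun i => Ef x i) d]
    exact sumEf hn0 hnd x ((d:ℝ) * s x) (fun h => hus h x)
  have htrF : ∀ y, ∑ j : Fin d, Ff y (j : ℕ) = (d:ℝ) * t y := by
    intro y
    rw [Fin.sum_univ_eq_sum_range (fun j => Ff y j) d]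
    exact sumEf hn0 hnd y ((d:ℝ) * t y) (fun h => hut h y)
  refine ⟨Matrix.diagonal fun p : Fin d × Fin d => ((Qf (p.1 : ℕ) (p.2 : ℕ) : ℝ) : ℂ),
    fun x => Matrix.diagonal fun i : Fin d => ((Ef x (i : ℕ) : ℝ) : ℂ),
    fun y => Matrix.diagonal fun j : Fin d => ((Ff y (j : ℕ) : ℝ) : ℂ),
    ?_, ?_, ⟨?_, ?_⟩, ⟨?_, ?_⟩, ?_⟩
  · exact Matrix.posSemidef_diagonal_iff.mpr fun p => by
      rw [Complex.zero_le_real]; exact hQnn _ _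
  · rw [Matrix.trace_diagonal, ← Complex.ofReal_sum]
    norm_cast
    rw [Fintype.sum_prod_type]
    have := key_double (M := ℝ) hnd (fun a b => Phat P lam s t a b / c2)
    rw [show (∑ i : Fin d, ∑ j : Fin d, Qf (i : ℕ) (j : ℕ))
        = ∑ a : Fin n, ∑ b : Fin n, Phat P lam s t a b / c2 from this]
    rw [Finset.sum_congr rfl fun a (_ : a ∈ Finset.univ) => (Finset.sum_div _ _ _).symm,
      ← Finset.sum_div, Phat_tot P lam s t hs1 ht1 hsum, hc2def, div_self hc2.ne']
  · intro x
    exact Matrix.posSemidef_diagonal_iff.mpr fun i => by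
      rw [Complex.zero_le_real]; exact hEnn _ _
  · ext i j
    rw [Matrix.sum_apply]
    by_cases hij : i = j
    · subst hij
      rw [Matrix.one_apply_eq]
      rw [Finset.sum_congr rfl fun x (_ : x ∈ Finset.univ) => Matrix.diagonal_apply_eq _ i]
      rw [← Complex.ofReal_sum]
      norm_cast
      exact hEsum_lemma hnd s hs1 i
    · rw [Matrix.one_apply_ne hij]
      rw [Finset.sum_congr rfl fun x (_ : x ∈ Finset.univ) => Matrix.diagonal_apply_ne _ hij]
      exact Finset.sum_const_zero
  · intro y
    exact Matrix.posSemidef_diagonal_iff.mpr fun j => by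
      rw [Complex.zero_le_real]; exact hFnn _ _
  · ext i j
    rw [Matrix.sum_apply]
    by_cases hij : i = j
    · subst hij
      rw [Matrix.one_apply_eq]
      rw [Finset.sum_congr rfl fun y (_ : y ∈ Finset.univ) => Matrix.diagonal_apply_eq _ i]
      rw [← Complex.ofReal_sum]
      norm_cast
      exact hEsum_lemma hnd t ht1 i
    · rw [Matrix.one_apply_ne hij]
      rw [Finset.sum_congr rfl fun y (_ : y ∈ Finset.univ) => Matrix.diagonal_apply_ne _ hij]
      exact Finset.sum_const_zero
  · intro x y
    rw [noisy_diag hd0.ne' lam (fun i => Ef x (i : ℕ)) (s x) (htrE x),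
      noisy_diag hd0.ne' lam (fun j => Ff y (j : ℕ)) (t y) (htrF y),
      Matrix.diagonal_kronecker_diagonal, Matrix.diagonal_mul_diagonal,
      Matrix.trace_diagonal]
    have hre : ∑ i : Fin d, ∑ j : Fin d,
        ((1 - lam) * Ef x (i : ℕ) + lam * s x) * ((1 - lam) * Ff y (j : ℕ) + lam * t y)
          * Qf (i : ℕ) (j : ℕ) = P x y := by
      have hpt : ∀ i j : Fin d,
          ((1 - lam) * Ef x (i : ℕ) + lam * s x) * ((1 - lam) * Ff y (j : ℕ) + lam * t y)
            * Qf (i : ℕ) (j : ℕ)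
          = (if hi : (i : ℕ) < n then (if hj : (j : ℕ) < n then
              ((1 - lam) * (if (⟨(i:ℕ), hi⟩ : Fin n) = x then (1:ℝ) else 0) + lam * s x)
              * ((1 - lam) * (if (⟨(j:ℕ), hj⟩ : Fin n) = y then (1:ℝ) else 0) + lam * t y)
              * (Phat P lam s t ⟨(i:ℕ), hi⟩ ⟨(j:ℕ), hj⟩ / c2) else 0) else 0) := by
        intro i j
        by_cases hi : (i : ℕ) < n
        · by_cases hj : (j : ℕ) < n
          · rw [dif_pos hi, dif_pos hj, hEf, hFf, hQf]
            dsimp only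
            rw [dif_pos hi, dif_pos hj, if_pos hi, if_pos hj]
            congr 2
            · congr 1
              simp [Fin.ext_iff, eq_comm]
            · congr 1
              simp [Fin.ext_iff, eq_comm]
          · rw [dif_pos hi, dif_neg hj, hQf]
            dsimp only
            rw [dif_pos hi, dif_neg hj, mul_zero]
        · rw [dif_neg hi, hQf]
          dsimp only
          rw [dif_neg hi, mul_zero]
      rw [Finset.sum_congr rfl fun i _ => Finset.sum_congr rfl fun j _ => hpt i j]
      refine (key_double hnd (fun a b =>
        ((1 - lam) * (if a = x then (1:ℝ) else 0) + lam * s x)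
          * ((1 - lam) * (if b = y then (1:ℝ) else 0) + lam * t y)
          * (Phat P lam s t a b / c2))).trans ?_
      show ∑ a : Fin n, ∑ b : Fin n,
        ((1 - lam) * (if a = x then (1:ℝ) else 0) + lam * s x)
          * ((1 - lam) * (if b = y then (1:ℝ) else 0) + lam * t y)
          * (Phat P lam s t a b / c2) = P x y
      -- now a pure Fin n computation
      have hinner : ∀ a : Fin n,
          ∑ b : Fin n, ((1 - lam) * (if b = y then (1:ℝ) else 0) + lam * t y)
            * (Phat P lam s t a b / c2)
          = (1 - lam) * (Phat P lam s t a y / c2)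
            + lam * t y * ((∑ b, Phat P lam s t a b) / c2) := by
        intro a
        have h1 : ∀ b : Fin n, ((1 - lam) * (if b = y then (1:ℝ) else 0) + lam * t y)
            * (Phat P lam s t a b / c2)
            = (1 - lam) * (if b = y then Phat P lam s t a b / c2 else 0)
              + lam * t y * (Phat P lam s t a b / c2) := fun b => by
          split_ifs with h <;> ring
        rw [Finset.sum_congr rfl fun b _ => h1 b, Finset.sum_add_distrib,
          ← Finset.mul_sum, ← Finset.mul_sum,
          Finset.sum_ite_eq' Finset.univ y (fun b => Phat P lam s t a b / c2)]
        simp [Finset.sum_div]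
      have hstep : ∑ a : Fin n, ∑ b : Fin n,
          ((1 - lam) * (if a = x then (1:ℝ) else 0) + lam * s x)
            * ((1 - lam) * (if b = y then (1:ℝ) else 0) + lam * t y)
            * (Phat P lam s t a b / c2)
          = ∑ a : Fin n, ((1 - lam) * (if a = x then (1:ℝ) else 0) + lam * s x)
            * ((1 - lam) * (Phat P lam s t a y / c2)
              + lam * t y * ((∑ b, Phat P lam s t a b) / c2)) := by
        refine Finset.sum_congr rfl fun a _ => ?_
        rw [← hinner a, Finset.mul_sum]
        exact Finset.sum_congr rfl fun b _ => by ring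
      rw [hstep]
      have h2 : ∀ a : Fin n, ((1 - lam) * (if a = x then (1:ℝ) else 0) + lam * s x)
          * ((1 - lam) * (Phat P lam s t a y / c2)
            + lam * t y * ((∑ b, Phat P lam s t a b) / c2))
          = (1 - lam) * (if a = x then
              ((1 - lam) * (Phat P lam s t a y / c2)
                + lam * t y * ((∑ b, Phat P lam s t a b) / c2)) else 0)
            + lam * s x * ((1 - lam) * (Phat P lam s t a y / c2)
              + lam * t y * ((∑ b, Phat P lam s t a b) / c2)) := fun a => by
        split_ifs with h <;> ring
      rw [Finset.sum_congr rfl fun a _ => h2 a, Finset.sum_add_distrib,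
        ← Finset.mul_sum, ← Finset.mul_sum,
        Finset.sum_ite_eq' Finset.univ x
          (fun a => (1 - lam) * (Phat P lam s t a y / c2)
            + lam * t y * ((∑ b, Phat P lam s t a b) / c2))]
      simp only [Finset.mem_univ, if_true]
      rw [Finset.sum_add_distrib, ← Finset.mul_sum, ← Finset.mul_sum,
        ← Finset.sum_div, ← Finset.sum_div]
      rw [Phat_row P lam s t ht1 hsum x, Phat_col P lam s t hs1 hsum y,
        Phat_tot P lam s t hs1 ht1 hsum]
      simp only [Phat, hc2def]
      field_simp
      ring
    calc (P x y : ℂ)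
        = ((∑ i : Fin d, ∑ j : Fin d,
            ((1 - lam) * Ef x (i : ℕ) + lam * s x) * ((1 - lam) * Ff y (j : ℕ) + lam * t y)
              * Qf (i : ℕ) (j : ℕ) : ℝ) : ℂ) := by rw [hre]
      _ = ∑ p : Fin d × Fin d,
            ((((1 - lam) * Ef x (p.1 : ℕ) + lam * s x : ℝ) : ℂ)
              * (((1 - lam) * Ff y (p.2 : ℕ) + lam * t y : ℝ) : ℂ))
            * ((Qf (p.1 : ℕ) (p.2 : ℕ) : ℝ) : ℂ) := by
          rw [Fintype.sum_prod_type]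
          push_cast
          rfl

/-- from positive s, t with ‖s‖₁ = ‖t‖₁ = 1 making P̂_λ^{s,t} entrywise
nonnegative, one can generate P under noise strength λ with local dimension
rank_psd(P̂_λ^{s,t}) · ⌈1 / min_{x,y}{s_x, t_y}⌉; in particular C_λ(P) is at most
this quantity. -/
theorem generates_dim_psdRank_mul_ceil
    {n : ℕ} (hn : 2 ≤ n) (P : Matrix (Fin n) (Fin n) ℝ)
    (hpos : ∀ x y, 0 < P x y) (hsum : ∑ x, ∑ y, P x y = 1)
    (lam : ℝ) (hlam0 : 0 ≤ lam) (hlam1 : lam < 1)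
    (s t : Fin n → ℝ) (hs : ∀ x, 0 < s x) (ht : ∀ y, 0 < t y)
    (hs1 : (∑ x, s x) = 1) (ht1 : (∑ y, t y) = 1)
    (hP : ∀ x y, 0 ≤ Phat P lam s t x y) :
    GeneratesWithNoise P lam
      (PsdRank (Matrix.of fun x y => Phat P lam s t x y) *
        ⌈1 / (min (Finset.univ.inf' ⟨⟨0, by omega⟩, Finset.mem_univ _⟩ s)
                  (Finset.univ.inf' ⟨⟨0, by omega⟩, Finset.mem_univ _⟩ t))⌉₊) := by
  classical
  have hn0 : 0 < n := by omega
  -- PsdRank is at least 1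
  have hr1 : 1 ≤ PsdRank (Matrix.of fun x y => Phat P lam s t x y) := by
    set SS := {r : ℕ | ∃ (C : Fin n → Matrix (Fin r) (Fin r) ℂ)
      (D : Fin n → Matrix (Fin r) (Fin r) ℂ),
      (∀ x, (C x).PosSemidef) ∧ (∀ y, (D y).PosSemidef) ∧
      ∀ x y, ((Matrix.of fun x y => Phat P lam s t x y) x y : ℂ) = (C x * D y).trace}
      with hSS
    have hmem : n ∈ SS := by
      refine ⟨fun x => Matrix.diagonal (fun i : Fin n => if i = x then (1:ℂ) else 0),
        fun y => Matrix.diagonal (fun a : Fin n => ((Phat P lam s t a y : ℝ) : ℂ)),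
        ?_, ?_, ?_⟩
      · intro x
        refine Matrix.posSemidef_diagonal_iff.mpr fun i => ?_
        split_ifs
        · exact zero_le_one
        · exact le_refl 0
      · intro y
        refine Matrix.posSemidef_diagonal_iff.mpr fun a => ?_
        rw [Complex.zero_le_real]
        exact hP a y
      · intro x y
        rw [Matrix.diagonal_mul_diagonal, Matrix.trace_diagonal]
        have : ∀ i : Fin n, (if i = x then (1:ℂ) else 0) * ((Phat P lam s t i y : ℝ) : ℂ)
            = (if i = x then ((Phat P lam s t i y : ℝ) : ℂ) else 0) := fun i => by
          split_ifs <;> simp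
        rw [Finset.sum_congr rfl fun i _ => this i,
          Finset.sum_ite_eq' Finset.univ x (fun i => ((Phat P lam s t i y : ℝ) : ℂ))]
        simp
    have h0 : 0 ∉ SS := by
      rintro ⟨C, D, -, -, hfact⟩
      have hz : ∀ x y, Phat P lam s t x y = 0 := by
        intro x y
        have := hfact x y
        rw [show ((C x * D y).trace : ℂ) = 0 from by
          simp [Matrix.trace]] at this
        exact_mod_cast this
      have htot := Phat_tot P lam s t hs1 ht1 hsum
      rw [Finset.sum_congr rfl fun x (_ : x ∈ Finset.univ) =>
        Finset.sum_congr rfl fun y (_ : y ∈ Finset.univ) => hz x y] at htot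
      rw [Finset.sum_const_zero, Finset.sum_const_zero] at htot
      have : (0:ℝ) < (1 - lam)^2 := pow_pos (by linarith) 2
      rw [← htot] at this
      exact lt_irrefl 0 this
    rw [Nat.one_le_iff_ne_zero]
    intro hzero
    have : sInf SS ∈ SS := Nat.sInf_mem ⟨n, hmem⟩
    rw [show sInf SS = PsdRank (Matrix.of fun x y => Phat P lam s t x y) from rfl,
      hzero] at this
    exact h0 this
  have key : ∀ (H : (Finset.univ : Finset (Fin n)).Nonempty) (r : ℕ), 1 ≤ r →
      GeneratesWithNoise P lam
        (r * ⌈1 / (min (Finset.univ.inf' H s) (Finset.univ.inf' H t))⌉₊) := by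
    intro H r hr
    set m := min (Finset.univ.inf' H s) (Finset.univ.inf' H t) with hm
    have hms : ∀ x, m ≤ s x := fun x =>
      le_trans (min_le_left _ _) (Finset.inf'_le s (Finset.mem_univ x))
    have hmt : ∀ y, m ≤ t y := fun y =>
      le_trans (min_le_right _ _) (Finset.inf'_le t (Finset.mem_univ y))
    have hm0 : 0 < m := lt_min
      ((Finset.lt_inf'_iff H).mpr fun x _ => hs x)
      ((Finset.lt_inf'_iff H).mpr fun y _ => ht y)
    set N := ⌈1/m⌉₊ with hN
    have hmN : 1/m ≤ (N:ℝ) := Nat.le_ceil _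
    have hnm : (n:ℝ) * m ≤ 1 := by
      have := Finset.card_nsmul_le_sum Finset.univ s m (fun x _ => hms x)
      rw [Finset.card_univ, Fintype.card_fin, nsmul_eq_mul, hs1] at this
      exact this
    have hnN : (n:ℝ) ≤ 1/m := (le_div_iff₀ hm0).mpr hnm
    set D := r * N with hD
    have hND : N ≤ D := Nat.le_mul_of_pos_left N (by omega)
    have hDR : (N:ℝ) ≤ (D:ℝ) := by exact_mod_cast hND
    have hdm : 1/m ≤ (D:ℝ) := le_trans hmN hDR
    have hnd : n ≤ D := by
      have : (n:ℝ) ≤ (D:ℝ) := le_trans hnN hdm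
      exact_mod_cast this
    have hds : ∀ x, 1 ≤ (D:ℝ) * s x := fun x => by
      have h := mul_le_mul hdm (hms x) hm0.le (by positivity)
      rwa [one_div_mul_cancel hm0.ne'] at h
    have hdt : ∀ y, 1 ≤ (D:ℝ) * t y := fun y => by
      have h := mul_le_mul hdm (hmt y) hm0.le (by positivity)
      rwa [one_div_mul_cancel hm0.ne'] at h
    have hmn : D = n → 1/(n:ℝ) ≤ m := by
      intro hDn
      have h1m : 1/m ≤ (n:ℝ) := by
        have : (D:ℝ) = (n:ℝ) := by exact_mod_cast hDn
        rwa [this] at hdm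
      rw [div_le_iff₀ hm0] at h1m
      rw [div_le_iff₀ (by exact_mod_cast hn0 : (0:ℝ) < n)]
      linarith [mul_comm m (n:ℝ)]
    have hus : D = n → ∀ x, (D:ℝ) * s x = 1 := by
      intro hDn x
      have := uniform_of_min hn0 s hs1 (fun x => le_trans (hmn hDn) (hms x)) x
      rw [hDn, this]
      field_simp
    have hut : D = n → ∀ y, (D:ℝ) * t y = 1 := by
      intro hDn y
      have := uniform_of_min hn0 t ht1 (fun y => le_trans (hmn hDn) (hmt y)) y
      rw [hDn, this]
      field_simp
    exact gen_main hn P hsum lam hlam1 s t hs1 ht1 hP D hnd hds hdt hus hut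
  exact key _ _ hr1


end
end

section
/- Fix k ∈ (0,1) and an integer m ≥ 1, and let B_m be the associated m×m correlation. If 1 − √k < λ < 1, then there exist no dimension d, density matrix σ on ℂ^d ⊗ ℂ^d, and POVMs {E_x}, {F_y} generating B_m under depolarizing noise of strength λ; i.e., B_m is unreachable for every noisy quantum protocol when λ > 1 − √k. -/
open Matrix BigOperators Finset
open scoped Kronecker ComplexOrder

noncomputable section

namespace BmatAuxPrf

lemma trace_conjTranspose_mul_self_nonneg {n : Type*} [Fintype n] (M : Matrix n n ℂ) :
    0 ≤ (Mᴴ * M).trace := by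
  rw [Matrix.trace]
  refine Finset.sum_nonneg fun i _ => ?_
  rw [Matrix.diag_apply, Matrix.mul_apply]
  exact Finset.sum_nonneg fun j _ => by
    simpa [Matrix.conjTranspose_apply] using star_mul_self_nonneg (M j i)

lemma trace_mul_nonneg {n : Type*} [Fintype n] [DecidableEq n] {A B : Matrix n n ℂ}
    (hA : A.PosSemidef) (hB : B.PosSemidef) : 0 ≤ (A * B).trace := by
  obtain ⟨P, rfl⟩ : ∃ P : Matrix n n ℂ, A = Pᴴ * P := by
    open scoped MatrixOrder in
    obtain ⟨B', hB'⟩ := CStarAlgebra.nonneg_iff_eq_star_mul_self.mp hA.nonneg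
    exact ⟨B', hB'⟩
  obtain ⟨Q, rfl⟩ : ∃ Q : Matrix n n ℂ, B = Qᴴ * Q := by
    open scoped MatrixOrder in
    obtain ⟨B', hB'⟩ := CStarAlgebra.nonneg_iff_eq_star_mul_self.mp hB.nonneg
    exact ⟨B', hB'⟩
  have h : (Pᴴ * P * (Qᴴ * Q)).trace = ((P * Qᴴ)ᴴ * (P * Qᴴ)).trace := by
    calc (Pᴴ * P * (Qᴴ * Q)).trace = ((Pᴴ * (P * Qᴴ)) * Q).trace := by
          simp only [Matrix.mul_assoc]
      _ = (Q * (Pᴴ * (P * Qᴴ))).trace := Matrix.trace_mul_comm _ _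
      _ = ((P * Qᴴ)ᴴ * (P * Qᴴ)).trace := by
          simp only [Matrix.conjTranspose_mul, Matrix.conjTranspose_conjTranspose,
            Matrix.mul_assoc]
  rw [h]
  exact trace_conjTranspose_mul_self_nonneg _

lemma kronecker_posSemidef {n m : Type*} [Fintype n] [DecidableEq n] [Fintype m] [DecidableEq m]
    {A : Matrix n n ℂ} {B : Matrix m m ℂ} (hA : A.PosSemidef) (hB : B.PosSemidef) :
    (A ⊗ₖ B).PosSemidef := by
  obtain ⟨P, rfl⟩ : ∃ P : Matrix n n ℂ, A = Pᴴ * P := by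
    open scoped MatrixOrder in
    obtain ⟨B', hB'⟩ := CStarAlgebra.nonneg_iff_eq_star_mul_self.mp hA.nonneg
    exact ⟨B', hB'⟩
  obtain ⟨Q, rfl⟩ : ∃ Q : Matrix m m ℂ, B = Qᴴ * Q := by
    open scoped MatrixOrder in
    obtain ⟨B', hB'⟩ := CStarAlgebra.nonneg_iff_eq_star_mul_self.mp hB.nonneg
    exact ⟨B', hB'⟩
  have hct : (P ⊗ₖ Q)ᴴ = Pᴴ ⊗ₖ Qᴴ := by
    ext ⟨i, j⟩ ⟨a, b⟩
    simp [Matrix.conjTranspose_apply, Matrix.kroneckerMap_apply, star_mul', mul_comm]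
  have h : (P ⊗ₖ Q)ᴴ * (P ⊗ₖ Q) = (Pᴴ * P) ⊗ₖ (Qᴴ * Q) := by
    rw [hct, Matrix.mul_kronecker_mul]
  rw [← h]
  exact Matrix.posSemidef_conjTranspose_mul_self _

lemma kronecker_sum_right {d : ℕ} {ι : Type*} (s : Finset ι)
    (A : Matrix (Fin d) (Fin d) ℂ) (B : ι → Matrix (Fin d) (Fin d) ℂ) :
    (∑ y ∈ s, A ⊗ₖ B y) = A ⊗ₖ (∑ y ∈ s, B y) := by
  ext ⟨i, j⟩ ⟨a, b⟩
  simp [Matrix.kroneckerMap_apply, Matrix.sum_apply, Finset.mul_sum]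

lemma kronecker_sum_left {d : ℕ} {ι : Type*} (s : Finset ι)
    (A : Matrix (Fin d) (Fin d) ℂ) (B : ι → Matrix (Fin d) (Fin d) ℂ) :
    (∑ y ∈ s, B y ⊗ₖ A) = (∑ y ∈ s, B y) ⊗ₖ A := by
  ext ⟨i, j⟩ ⟨a, b⟩
  simp [Matrix.kroneckerMap_apply, Matrix.sum_apply, Finset.sum_mul]

lemma sum_cos_eq_zero (m : ℕ) (hm : 2 ≤ m) (c : ℝ) :
    ∑ y : Fin m, Real.cos (2 * Real.pi * (c + (y.val : ℝ)) / m) = 0 := by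
  have hm0 : (m : ℂ) ≠ 0 := Nat.cast_ne_zero.mpr (by omega)
  set z : ℂ := Complex.exp (2 * (Real.pi : ℂ) * Complex.I / m) with hz
  have hπ : (2 * (Real.pi : ℂ) * Complex.I) ≠ 0 := by
    simp [Real.pi_ne_zero, Complex.I_ne_zero, Complex.ofReal_ne_zero]
  have hz1 : z ≠ 1 := by
    intro h
    rw [hz, Complex.exp_eq_one_iff] at h
    obtain ⟨nn, hn⟩ := h
    have h1 : (1 / m : ℂ) * (2 * (Real.pi : ℂ) * Complex.I)
        = (nn : ℂ) * (2 * (Real.pi : ℂ) * Complex.I) := by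
      rw [← hn]; ring
    have h2 : (1 / m : ℂ) = (nn : ℂ) := mul_right_cancel₀ hπ h1
    have h3 : (1 / m : ℝ) = (nn : ℝ) := by
      have := congrArg Complex.re h2
      simpa using this
    have h4 : (0 : ℝ) < 1 / m := by positivity
    have h5 : (1 / m : ℝ) < 1 := by
      rw [div_lt_one (by positivity)]
      exact_mod_cast by omega
    rw [h3] at h4 h5
    have h6 : (0 : ℤ) < nn := by exact_mod_cast h4
    have h7 : (nn : ℤ) < 1 := by exact_mod_cast h5
    omega
  have hzm : z ^ m = 1 := by
    rw [hz, ← Complex.exp_nat_mul,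
      show (m : ℂ) * (2 * (Real.pi : ℂ) * Complex.I / m) = 2 * (Real.pi : ℂ) * Complex.I by
        field_simp]
    exact Complex.exp_two_pi_mul_I
  have hgeom : ∑ i ∈ Finset.range m, z ^ i = 0 := by
    rw [geom_sum_eq hz1, hzm]
    simp
  have key : ∑ y : Fin m, Complex.exp (((2 * Real.pi * (c + (y.val : ℝ)) / m : ℝ) : ℂ)
      * Complex.I) = 0 := by
    have he : ∀ y : Fin m, ((2 * Real.pi * (c + (y.val : ℝ)) / m : ℝ) : ℂ) * Complex.I
        = ((c : ℂ) * (2 * (Real.pi : ℂ) * Complex.I / m))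
          + ((y.val : ℕ) : ℂ) * (2 * (Real.pi : ℂ) * Complex.I / m) := by
      intro y
      push_cast
      field_simp
    simp_rw [he, Complex.exp_add, Complex.exp_nat_mul, ← hz, ← Finset.mul_sum]
    rw [Fin.sum_univ_eq_sum_range (fun i => z ^ i), hgeom, mul_zero]
  have h := congrArg Complex.re key
  rw [Complex.re_sum] at h
  simp_rw [Complex.exp_ofReal_mul_I_re] at h
  simpa using h

lemma bmat_symm (m : ℕ) (k : ℝ) (x y : Fin m) : Bmat m k x y = Bmat m k y x := by
  simp [Bmat, add_comm]

lemma bmat_row_sum (m : ℕ) (hm : 2 ≤ m) (k : ℝ) (x : Fin m) :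
    ∑ y, Bmat m k x y = 1 / m := by
  have hm0 : (m : ℝ) ≠ 0 := Nat.cast_ne_zero.mpr (by omega)
  simp only [Bmat, Matrix.of_apply]
  rw [← Finset.mul_sum, Finset.sum_sub_distrib, ← Finset.mul_sum,
    sum_cos_eq_zero m hm (x.val : ℝ)]
  simp only [Finset.sum_const, Finset.card_univ, Fintype.card_fin, nsmul_eq_mul, mul_one,
    mul_zero, sub_zero]
  field_simp

lemma bmat_neg (m : ℕ) [NeZero m] (k : ℝ) (x : Fin m) :
    Bmat m k x (-x) = 1 / (m : ℝ) ^ 2 * (1 - k) := by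
  have hm0 : (m : ℝ) ≠ 0 := Nat.cast_ne_zero.mpr (NeZero.ne m)
  have h := congrArg Fin.val (neg_add_cancel x)
  rw [Fin.val_add, Fin.val_zero] at h
  obtain ⟨j, hj⟩ := Nat.dvd_of_mod_eq_zero h
  have hsum : (x.val : ℝ) + (((-x : Fin m)).val : ℝ) = (m : ℝ) * (j : ℝ) := by
    have h2 : x.val + (-x : Fin m).val = m * j := by omega
    exact_mod_cast h2
  simp only [Bmat, Matrix.of_apply]
  rw [hsum, show 2 * Real.pi * ((m : ℝ) * (j : ℝ)) / m = (j : ℝ) * (2 * Real.pi) by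
    field_simp, Real.cos_nat_mul_two_pi, mul_one]

lemma expand_trace {d : ℕ} (lam : ℝ) (A B : Matrix (Fin d) (Fin d) ℂ)
    (σ : Matrix (Fin d × Fin d) (Fin d × Fin d) ℂ) (hσtr : σ.trace = 1) :
    ((noisyEffect lam A ⊗ₖ noisyEffect lam B) * σ).trace
      = ((1 - lam : ℝ) : ℂ) ^ 2 * ((A ⊗ₖ B) * σ).trace
        + ((1 - lam : ℝ) : ℂ) * ((lam : ℂ) * B.trace / d) * ((A ⊗ₖ (1 : Matrix (Fin d) (Fin d) ℂ)) * σ).trace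
        + ((1 - lam : ℝ) : ℂ) * ((lam : ℂ) * A.trace / d) * (((1 : Matrix (Fin d) (Fin d) ℂ) ⊗ₖ B) * σ).trace
        + ((lam : ℂ) * A.trace / d) * ((lam : ℂ) * B.trace / d) := by
  simp only [noisyEffect, Matrix.add_kronecker, Matrix.kronecker_add, Matrix.smul_kronecker,
    Matrix.kronecker_smul, Matrix.one_kronecker_one, Matrix.add_mul, Matrix.smul_mul,
    Matrix.trace_add, Matrix.trace_smul, Matrix.one_mul, hσtr, smul_eq_mul, smul_smul]
  ring

lemma marginal_trace_left {d : ℕ} (lam : ℝ) (A : Matrix (Fin d) (Fin d) ℂ)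
    (σ : Matrix (Fin d × Fin d) (Fin d × Fin d) ℂ) (hσtr : σ.trace = 1) :
    ((noisyEffect lam A ⊗ₖ (1 : Matrix (Fin d) (Fin d) ℂ)) * σ).trace
      = ((1 - lam : ℝ) : ℂ) * ((A ⊗ₖ (1 : Matrix (Fin d) (Fin d) ℂ)) * σ).trace
        + (lam : ℂ) * A.trace / d := by
  simp only [noisyEffect, Matrix.add_kronecker, Matrix.smul_kronecker,
    Matrix.one_kronecker_one, Matrix.add_mul, Matrix.smul_mul, Matrix.trace_add,
    Matrix.trace_smul, Matrix.one_mul, hσtr, smul_eq_mul]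
  ring

lemma marginal_trace_right {d : ℕ} (lam : ℝ) (A : Matrix (Fin d) (Fin d) ℂ)
    (σ : Matrix (Fin d × Fin d) (Fin d × Fin d) ℂ) (hσtr : σ.trace = 1) :
    (((1 : Matrix (Fin d) (Fin d) ℂ) ⊗ₖ noisyEffect lam A) * σ).trace
      = ((1 - lam : ℝ) : ℂ) * (((1 : Matrix (Fin d) (Fin d) ℂ) ⊗ₖ A) * σ).trace
        + (lam : ℂ) * A.trace / d := by
  simp only [noisyEffect, Matrix.kronecker_add, Matrix.kronecker_smul,
    Matrix.one_kronecker_one, Matrix.add_mul, Matrix.smul_mul, Matrix.trace_add,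
    Matrix.trace_smul, Matrix.one_mul, hσtr, smul_eq_mul]
  ring

lemma noisy_sum_one {d m : ℕ} (hd : (d : ℂ) ≠ 0) (lam : ℝ)
    (G : Fin m → Matrix (Fin d) (Fin d) ℂ) (hGs : ∑ x, G x = 1) :
    ∑ x, noisyEffect lam (G x) = 1 := by
  simp only [noisyEffect]
  rw [Finset.sum_add_distrib, ← Finset.smul_sum, hGs, ← Finset.sum_smul]
  have h1 : ∑ x, (lam : ℂ) * (G x).trace / d = lam := by
    rw [← Finset.sum_div, ← Finset.mul_sum, ← Matrix.trace_sum, hGs, Matrix.trace_one,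
      Fintype.card_fin]
    field_simp
  rw [h1, ← add_smul, show ((1 - lam : ℝ) : ℂ) + (lam : ℂ) = 1 by push_cast; ring, one_smul]

end BmatAuxPrf

/-- for noise strengths λ with 1 − √k < λ < 1, the correlation B_m cannot
be generated by any noisy quantum protocol of any local dimension. -/
theorem Bmat_unreachable_above_threshold
    (k : ℝ) (hk0 : 0 < k) (hk1 : k < 1) (m : ℕ) (hm : 1 ≤ m)
    (lam : ℝ) (hlow : 1 - Real.sqrt k < lam) (hhigh : lam < 1) :
    ∀ d : ℕ, ¬ GeneratesWithNoise (Bmat m k) lam d := by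
  intro d hgen
  obtain ⟨σ, E, F, hσ, hσtr, ⟨hEpsd, hEsum⟩, ⟨hFpsd, hFsum⟩, hB⟩ := hgen
  rcases Nat.eq_zero_or_pos d with rfl | hd
  · rw [Matrix.trace] at hσtr
    simp at hσtr
  have hd0 : (d : ℂ) ≠ 0 := Nat.cast_ne_zero.mpr (by omega)
  haveI : NeZero m := ⟨by omega⟩
  have hc0 : (0 : ℝ) < 1 - lam := by linarith
  rcases eq_or_lt_of_le hm with hm1 | hm2
  · -- m = 1
    subst hm1
    have hE1 := BmatAuxPrf.noisy_sum_one hd0 lam E hEsum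
    have hF1 := BmatAuxPrf.noisy_sum_one hd0 lam F hFsum
    rw [Fin.sum_univ_one] at hE1 hF1
    have hB00 := hB 0 0
    rw [hE1, hF1, Matrix.one_kronecker_one, Matrix.one_mul, hσtr] at hB00
    have hBv : Bmat 1 k 0 0 = 1 - k := by
      simp [Bmat]
    rw [hBv] at hB00
    have : (1 - k : ℝ) = 1 := by exact_mod_cast hB00
    linarith
  · -- m ≥ 2
    have hm2' : 2 ≤ m := hm2
    have hmR : (0 : ℝ) < m := by exact_mod_cast (by omega : 0 < m)
    have honed : (1 : Matrix (Fin d) (Fin d) ℂ).PosSemidef := Matrix.PosSemidef.one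
    -- marginal identities
    have hrow : ∀ x : Fin m,
        ((1 - lam : ℝ) : ℂ) * ((E x ⊗ₖ (1 : Matrix (Fin d) (Fin d) ℂ)) * σ).trace
          + (lam : ℂ) * (E x).trace / d = 1 / (m : ℂ) := by
      intro x
      have h1 : ∑ y, (Bmat m k x y : ℂ) = 1 / (m : ℂ) := by
        have h0 := BmatAuxPrf.bmat_row_sum m hm2' k x
        calc ∑ y, ((Bmat m k x y : ℝ) : ℂ) = (((∑ y, Bmat m k x y : ℝ)) : ℂ) := by
              push_cast; rfl
          _ = 1 / (m : ℂ) := by rw [h0]; push_cast; rfl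
      have h2 : ∑ y, (Bmat m k x y : ℂ)
          = ((noisyEffect lam (E x) ⊗ₖ (1 : Matrix (Fin d) (Fin d) ℂ)) * σ).trace := by
        rw [Finset.sum_congr rfl fun y _ => hB x y, ← Matrix.trace_sum, ← Finset.sum_mul,
          BmatAuxPrf.kronecker_sum_right, BmatAuxPrf.noisy_sum_one hd0 lam F hFsum]
      rw [h2, BmatAuxPrf.marginal_trace_left lam (E x) σ hσtr] at h1
      exact h1
    have hcol : ∀ y : Fin m,
        ((1 - lam : ℝ) : ℂ) * (((1 : Matrix (Fin d) (Fin d) ℂ) ⊗ₖ F y) * σ).trace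
          + (lam : ℂ) * (F y).trace / d = 1 / (m : ℂ) := by
      intro y
      have h1 : ∑ x, (Bmat m k x y : ℂ) = 1 / (m : ℂ) := by
        have h0 : ∑ x, Bmat m k x y = 1 / m := by
          rw [Finset.sum_congr rfl fun x _ => BmatAuxPrf.bmat_symm m k x y]
          exact BmatAuxPrf.bmat_row_sum m hm2' k y
        calc ∑ x, ((Bmat m k x y : ℝ) : ℂ) = (((∑ x, Bmat m k x y : ℝ)) : ℂ) := by
              push_cast; rfl
          _ = 1 / (m : ℂ) := by rw [h0]; push_cast; rfl
      have h2 : ∑ x, (Bmat m k x y : ℂ)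
          = (((1 : Matrix (Fin d) (Fin d) ℂ) ⊗ₖ noisyEffect lam (F y)) * σ).trace := by
        rw [Finset.sum_congr rfl fun x _ => hB x y, ← Matrix.trace_sum, ← Finset.sum_mul,
          BmatAuxPrf.kronecker_sum_left, BmatAuxPrf.noisy_sum_one hd0 lam E hEsum]
      rw [h2, BmatAuxPrf.marginal_trace_right lam (F y) σ hσtr] at h1
      exact h1
    -- nonnegativity
    have hfnn : ∀ x : Fin m, 0 ≤ ((E x ⊗ₖ (1 : Matrix (Fin d) (Fin d) ℂ)) * σ).trace :=
      fun x => BmatAuxPrf.trace_mul_nonneg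
        (BmatAuxPrf.kronecker_posSemidef (hEpsd x) honed) hσ
    have hgnn : ∀ y : Fin m, 0 ≤ (((1 : Matrix (Fin d) (Fin d) ℂ) ⊗ₖ F y) * σ).trace :=
      fun y => BmatAuxPrf.trace_mul_nonneg
        (BmatAuxPrf.kronecker_posSemidef honed (hFpsd y)) hσ
    have hTnn : ∀ x y : Fin m, 0 ≤ ((E x ⊗ₖ F y) * σ).trace :=
      fun x y => BmatAuxPrf.trace_mul_nonneg
        (BmatAuxPrf.kronecker_posSemidef (hEpsd x) (hFpsd y)) hσ
    -- real parts
    set u : Fin m → ℝ := fun x => (((E x ⊗ₖ (1 : Matrix (Fin d) (Fin d) ℂ)) * σ).trace).re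
      with hu
    set v : Fin m → ℝ := fun y => ((((1 : Matrix (Fin d) (Fin d) ℂ) ⊗ₖ F y) * σ).trace).re
      with hv
    have hfre : ∀ x : Fin m,
        ((E x ⊗ₖ (1 : Matrix (Fin d) (Fin d) ℂ)) * σ).trace = ((u x : ℝ) : ℂ) := by
      intro x
      obtain ⟨h1, h2⟩ := Complex.nonneg_iff.mp (hfnn x)
      exact Complex.ext rfl (by simpa using h2.symm)
    have hgre : ∀ y : Fin m,
        (((1 : Matrix (Fin d) (Fin d) ℂ) ⊗ₖ F y) * σ).trace = ((v y : ℝ) : ℂ) := by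
      intro y
      obtain ⟨h1, h2⟩ := Complex.nonneg_iff.mp (hgnn y)
      exact Complex.ext rfl (by simpa using h2.symm)
    have hunn : ∀ x, 0 ≤ u x := fun x => (Complex.nonneg_iff.mp (hfnn x)).1
    have hvnn : ∀ y, 0 ≤ v y := fun y => (Complex.nonneg_iff.mp (hgnn y)).1
    -- sums
    have husum : ∑ x, u x = 1 := by
      have hfs : ∑ x, ((E x ⊗ₖ (1 : Matrix (Fin d) (Fin d) ℂ)) * σ).trace = 1 := by
        rw [← Matrix.trace_sum, ← Finset.sum_mul, BmatAuxPrf.kronecker_sum_left, hEsum,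
          Matrix.one_kronecker_one, Matrix.one_mul, hσtr]
      have := congrArg Complex.re hfs
      rw [Complex.re_sum] at this
      simpa using this
    have hvsum : ∑ y, v y = 1 := by
      have hgs : ∑ y, (((1 : Matrix (Fin d) (Fin d) ℂ) ⊗ₖ F y) * σ).trace = 1 := by
        rw [← Matrix.trace_sum, ← Finset.sum_mul, BmatAuxPrf.kronecker_sum_right, hFsum,
          Matrix.one_kronecker_one, Matrix.one_mul, hσtr]
      have := congrArg Complex.re hgs
      rw [Complex.re_sum] at this
      simpa using this
    -- key inequality at the special pairs
    have hkey : ∀ x : Fin m, k / (m : ℝ) ^ 2 ≤ (1 - lam) ^ 2 * (u x * v (-x)) := by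
      intro x
      have hPx : (lam : ℂ) * (E x).trace / d
          = 1 / (m : ℂ) - ((1 - lam : ℝ) : ℂ) * ((u x : ℝ) : ℂ) := by
        rw [← hfre x]
        linear_combination hrow x
      have hQx : (lam : ℂ) * (F (-x)).trace / d
          = 1 / (m : ℂ) - ((1 - lam : ℝ) : ℂ) * ((v (-x) : ℝ) : ℂ) := by
        rw [← hgre (-x)]
        linear_combination hcol (-x)
      have hexp := hB x (-x)
      rw [BmatAuxPrf.expand_trace lam (E x) (F (-x)) σ hσtr, hPx, hQx, hfre x, hgre (-x)]
        at hexp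
      have hBv : ((Bmat m k x (-x) : ℝ) : ℂ) = 1 / (m : ℂ) ^ 2 * (1 - (k : ℂ)) := by
        rw [BmatAuxPrf.bmat_neg m k x]
        push_cast
        ring
      set t : ℝ := (((E x ⊗ₖ F (-x)) * σ).trace).re with ht
      have htre : ((E x ⊗ₖ F (-x)) * σ).trace = ((t : ℝ) : ℂ) := by
        obtain ⟨h1, h2⟩ := Complex.nonneg_iff.mp (hTnn x (-x))
        exact Complex.ext rfl (by simpa using h2.symm)
      have htnn : 0 ≤ t := (Complex.nonneg_iff.mp (hTnn x (-x))).1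
      rw [htre, hBv] at hexp
      have hmC : (m : ℂ) ≠ 0 := Nat.cast_ne_zero.mpr (by omega)
      have hidC : (((1 - lam) ^ 2 * (u x * v (-x)) : ℝ) : ℂ)
          = (((1 - lam) ^ 2 * t + k / (m : ℝ) ^ 2 : ℝ) : ℂ) := by
        push_cast at hexp ⊢
        linear_combination hexp
      have hidR : (1 - lam) ^ 2 * (u x * v (-x)) = (1 - lam) ^ 2 * t + k / (m : ℝ) ^ 2 :=
        by exact_mod_cast hidC
      nlinarith [sq_nonneg (1 - lam)]
    -- Cauchy–Schwarz wrap-up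
    have hsq : ∀ x : Fin m, Real.sqrt k / ((m : ℝ) * (1 - lam))
        ≤ Real.sqrt (u x) * Real.sqrt (v (-x)) := by
      intro x
      have h1 := hkey x
      have h2 : (Real.sqrt k / ((m : ℝ) * (1 - lam))) ^ 2
          ≤ (Real.sqrt (u x) * Real.sqrt (v (-x))) ^ 2 := by
        rw [div_pow, mul_pow, mul_pow, Real.sq_sqrt hk0.le, Real.sq_sqrt (hunn x),
          Real.sq_sqrt (hvnn (-x)), div_le_iff₀ (by positivity)]
        have h1' : k ≤ (1 - lam) ^ 2 * (u x * v (-x)) * (m : ℝ) ^ 2 := by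
          rw [div_le_iff₀ (by positivity)] at h1
          exact h1
        nlinarith [h1']
      exact le_of_pow_le_pow_left₀ two_ne_zero (by positivity) h2
    have hS : Real.sqrt k / (1 - lam) ≤ ∑ x, Real.sqrt (u x) * Real.sqrt (v (-x)) := by
      have hsum := Finset.sum_le_sum (fun x (_ : x ∈ Finset.univ) => hsq x)
      rw [Finset.sum_const, Finset.card_univ, Fintype.card_fin, nsmul_eq_mul] at hsum
      calc Real.sqrt k / (1 - lam)
          = (m : ℝ) * (Real.sqrt k / ((m : ℝ) * (1 - lam))) := by
            field_simp
        _ ≤ _ := hsum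
    have hCS : (∑ x, Real.sqrt (u x) * Real.sqrt (v (-x))) ^ 2
        ≤ (∑ x, u x) * (∑ x, v (-x)) := by
      have h := Finset.sum_mul_sq_le_sq_mul_sq Finset.univ
        (fun x => Real.sqrt (u x)) (fun x => Real.sqrt (v (-x)))
      calc (∑ x, Real.sqrt (u x) * Real.sqrt (v (-x))) ^ 2
          ≤ (∑ x, Real.sqrt (u x) ^ 2) * (∑ x, Real.sqrt (v (-x)) ^ 2) := h
        _ = (∑ x, u x) * (∑ x, v (-x)) := by
            congr 1
            · exact Finset.sum_congr rfl fun x _ => Real.sq_sqrt (hunn x)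
            · exact Finset.sum_congr rfl fun x _ => Real.sq_sqrt (hvnn (-x))
    have hvsum' : ∑ x : Fin m, v (-x) = 1 := by
      rw [← hvsum]
      exact Fintype.sum_equiv (Equiv.neg (Fin m)) _ _ (fun x => rfl)
    rw [husum, hvsum', one_mul] at hCS
    have hks : 0 < Real.sqrt k := Real.sqrt_pos.mpr hk0
    have hck : 1 - lam < Real.sqrt k := by linarith
    have hlt : 1 < Real.sqrt k / (1 - lam) := by
      rw [lt_div_iff₀ hc0]
      linarith
    have hgt1 : 1 < ∑ x, Real.sqrt (u x) * Real.sqrt (v (-x)) := lt_of_lt_of_le hlt hS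
    nlinarith [hCS, hgt1]

end
end
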